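/- arXiv:0805.3450 — 3 statements merged into one kernel-verified Lean document; each statement's English description precedes it below -/
import Mathlib

section
/- Let f ∈ L¹(μ) be F₀-measurable and suppose there is a constant C > 0 with |f| ≥ C almost everywhere. If the sequence of partial sums (Σ_{k=1}^n f·E(f∘T^k | F₀))_{n≥1} converges in L¹(μ), then the sequence of partial sums (Σ_{k=1}^n E(f∘T^k | F₀))_{n≥1} converges in L¹(μ). (For functions bounded away from zero, the projective criterion implies the martingale–coboundary decomposition in L¹.) -/
open MeasureTheory Filter
open scoped Topology ENNReal

/-- For functions bounded away from zero, the projective criterion implies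
the martingale–coboundary decomposition in L¹: if `f ∈ L¹(μ)` is `F₀`-measurable,
`|f| ≥ C > 0` a.e., and the partial sums `∑_{k=1}^n f · E(f ∘ T^k | F₀)` converge in
`L¹(μ)`, then the partial sums `∑_{k=1}^n E(f ∘ T^k | F₀)` converge in `L¹(μ)`. -/
theorem bounded_below_projective_criterion_implies_martingale_coboundary_L1
    {Ω : Type*} [m0 : MeasurableSpace Ω] (μ : Measure Ω) [IsProbabilityMeasure μ]
    (T : Equiv.Perm Ω) (hT : Measurable T) (hTinv : Measurable T.symm)
    (hTmp : MeasurePreserving T μ μ)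
    (F₀ : MeasurableSpace Ω) (hF₀le : F₀ ≤ m0)
    (hF₀T : F₀ ≤ MeasurableSpace.comap T F₀)
    (f : Ω → ℝ) (hfmeas : StronglyMeasurable[F₀] f) (hfint : Integrable f μ)
    (C : ℝ) (hC : 0 < C) (hfC : ∀ᵐ ω ∂μ, C ≤ |f ω|)
    (hconv : ∃ h : Ω → ℝ,
      Tendsto (fun n => eLpNorm (fun ω =>
        (∑ k ∈ Finset.Icc 1 n, f ω * (μ[fun ω' => f ((T ^ k) ω') | F₀]) ω) - h ω) 1 μ)
        atTop (𝓝 0)) :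
    ∃ g : Ω → ℝ,
      Tendsto (fun n => eLpNorm (fun ω =>
        (∑ k ∈ Finset.Icc 1 n, (μ[fun ω' => f ((T ^ k) ω') | F₀]) ω) - g ω) 1 μ)
        atTop (𝓝 0) := by

  obtain ⟨h, hh⟩ := hconv
  refine ⟨fun ω => h ω / f ω, ?_⟩
  have hbound : ∀ n, eLpNorm (fun ω =>
      (∑ k ∈ Finset.Icc 1 n, (μ[fun ω' => f ((T ^ k) ω') | F₀]) ω) - h ω / f ω) 1 μ
      ≤ (‖(C⁻¹ : ℝ)‖₊ : ℝ≥0∞) * eLpNorm (fun ω =>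
        (∑ k ∈ Finset.Icc 1 n, f ω * (μ[fun ω' => f ((T ^ k) ω') | F₀]) ω) - h ω) 1 μ := by
    intro n
    have : eLpNorm (fun ω =>
        (∑ k ∈ Finset.Icc 1 n, (μ[fun ω' => f ((T ^ k) ω') | F₀]) ω) - h ω / f ω) 1 μ
        ≤ eLpNorm ((C⁻¹ : ℝ) • (fun ω =>
        (∑ k ∈ Finset.Icc 1 n, f ω * (μ[fun ω' => f ((T ^ k) ω') | F₀]) ω) - h ω)) 1 μ := by
      refine eLpNorm_mono_ae ?_
      filter_upwards [hfC] with ω hω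
      have hf0 : f ω ≠ 0 := by
        intro h0; rw [h0, abs_zero] at hω; linarith
      have hsum : ∑ k ∈ Finset.Icc 1 n, f ω * (μ[fun ω' => f ((T ^ k) ω') | F₀]) ω
          = f ω * ∑ k ∈ Finset.Icc 1 n, (μ[fun ω' => f ((T ^ k) ω') | F₀]) ω := by
        rw [Finset.mul_sum]
      simp only [Pi.smul_apply, smul_eq_mul, Real.norm_eq_abs, hsum]
      have key : (∑ k ∈ Finset.Icc 1 n, (μ[fun ω' => f ((T ^ k) ω') | F₀]) ω) - h ω / f ω
          = (f ω * (∑ k ∈ Finset.Icc 1 n, (μ[fun ω' => f ((T ^ k) ω') | F₀]) ω) - h ω) / f ω := by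
        field_simp
      rw [key, abs_mul, abs_div]
      rw [div_le_iff₀ (abs_pos.mpr hf0)]
      have : |C⁻¹| = C⁻¹ := abs_of_pos (by positivity)
      rw [this, mul_comm (C⁻¹) _, mul_assoc]
      have hle : (1 : ℝ) ≤ C⁻¹ * |f ω| := by
        rw [inv_mul_eq_div, le_div_iff₀ hC]
        simpa using hω
      nlinarith [abs_nonneg (f ω * (∑ k ∈ Finset.Icc 1 n, (μ[fun ω' => f ((T ^ k) ω') | F₀]) ω) - h ω)]
    calc _ ≤ _ := this
    _ = _ := by rw [eLpNorm_const_smul, enorm_eq_nnnorm]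
  have hlim : Tendsto (fun n => (‖(C⁻¹ : ℝ)‖₊ : ℝ≥0∞) * eLpNorm (fun ω =>
      (∑ k ∈ Finset.Icc 1 n, f ω * (μ[fun ω' => f ((T ^ k) ω') | F₀]) ω) - h ω) 1 μ)
      atTop (𝓝 0) := by
    have := ENNReal.Tendsto.const_mul (a := (‖(C⁻¹ : ℝ)‖₊ : ℝ≥0∞)) hh (Or.inr ENNReal.coe_ne_top)
    simpa using this
  exact tendsto_of_tendsto_of_tendsto_of_le_of_le tendsto_const_nhds hlim
    (fun n => zero_le) hbound
end

section
/- Let N ∈ ℕ, 0 < ρ < 1 and ε > 0. There exists a set A ∈ 𝒞 such that μ(A) = ρ and for all i, j ∈ {0, …, N}, μ(T^{-i}A Δ T^{-j}A) ≤ ε, where Δ denotes symmetric difference. -/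
set_option linter.unusedSectionVars false
set_option linter.unusedVariables false
set_option maxHeartbeats 1000000

open MeasureTheory Filter Set
open scoped Topology ENNReal

section QuasiInvariantAux
variable {Ω : Type*}

section MeasAux
variable [m0 : MeasurableSpace Ω] {μ : Measure Ω}



lemma my_exists_small_subset [IsFiniteMeasure μ]
    (C : MeasurableSpace Ω) (hCle : C ≤ m0)
    (hCna : ∀ A : Set Ω, MeasurableSet[C] A → 0 < μ A →
      ∃ B : Set Ω, MeasurableSet[C] B ∧ B ⊆ A ∧ 0 < μ B ∧ μ B < μ A)
    (A : Set Ω) (hA : MeasurableSet[C] A) (hApos : 0 < μ A)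
    (c : ℝ≥0∞) (hc : 0 < c) :
    ∃ D : Set Ω, MeasurableSet[C] D ∧ D ⊆ A ∧ 0 < μ D ∧ μ D ≤ c := by
  have half : ∀ A : Set Ω, MeasurableSet[C] A → 0 < μ A →
      ∃ D : Set Ω, MeasurableSet[C] D ∧ D ⊆ A ∧ 0 < μ D ∧ 2 * μ D ≤ μ A := by
    intro A hA hApos
    obtain ⟨B, hB, hBA, hBpos, hBlt⟩ := hCna A hA hApos
    rcases le_or_gt (2 * μ B) (μ A) with h | h
    · exact ⟨B, hB, hBA, hBpos, h⟩
    · refine ⟨A \ B, hA.diff hB, diff_subset, ?_, ?_⟩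
      · have hd : μ (A \ B) = μ A - μ B :=
          measure_diff hBA (hCle _ hB).nullMeasurableSet (measure_ne_top μ B)
        rw [hd]
        exact tsub_pos_of_lt hBlt
      · have hd : μ (A \ B) = μ A - μ B :=
          measure_diff hBA (hCle _ hB).nullMeasurableSet (measure_ne_top μ B)
        have h1 : μ A - μ B ≤ μ B := tsub_le_iff_right.2 (by
          rw [← two_mul]; exact h.le)
        calc 2 * μ (A \ B) = μ (A \ B) + μ (A \ B) := two_mul _
          _ ≤ μ B + (μ A - μ B) := by rw [hd]; exact add_le_add h1 le_rfl
          _ = μ A := by rw [add_comm]; exact tsub_add_cancel_of_le hBlt.le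
  -- iterate halving
  have iter : ∀ n : ℕ, ∃ D : Set Ω, MeasurableSet[C] D ∧ D ⊆ A ∧ 0 < μ D ∧
      μ D ≤ μ A * 2⁻¹ ^ n := by
    intro n
    induction n with
    | zero => exact ⟨A, hA, subset_rfl, hApos, by simp⟩
    | succ n ih =>
      obtain ⟨D, hD, hDA, hDpos, hDle⟩ := ih
      obtain ⟨D', hD', hD'D, hD'pos, hD'le⟩ := half D hD hDpos
      refine ⟨D', hD', hD'D.trans hDA, hD'pos, ?_⟩
      have : μ D' ≤ μ D * 2⁻¹ := by
        rw [mul_comm, ← ENNReal.div_eq_inv_mul]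
        rw [ENNReal.le_div_iff_mul_le (by norm_num) (by norm_num)]
        rwa [mul_comm]
      calc μ D' ≤ μ D * 2⁻¹ := this
        _ ≤ μ A * 2⁻¹ ^ n * 2⁻¹ := by gcongr
        _ = μ A * 2⁻¹ ^ (n + 1) := by ring
  obtain ⟨n, hn⟩ : ∃ n : ℕ, μ A * 2⁻¹ ^ n ≤ c := by
    obtain ⟨n, hn⟩ := ENNReal.exists_inv_two_pow_lt
      (a := c / (μ A + 1)) (by
        have h1 : μ A + 1 ≠ ⊤ := by simp [measure_ne_top μ A]
        simp only [ne_eq, ENNReal.div_eq_zero_iff, not_or]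
        exact ⟨hc.ne', h1⟩)
    refine ⟨n, ?_⟩
    have h1 : μ A * 2⁻¹ ^ n ≤ μ A * (c / (μ A + 1)) := mul_le_mul_right hn.le _
    refine h1.trans ?_
    calc μ A * (c / (μ A + 1)) ≤ (μ A + 1) * (c / (μ A + 1)) := by
          gcongr; exact le_self_add
      _ ≤ c := ENNReal.mul_div_le
  obtain ⟨D, hD, hDA, hDpos, hDle⟩ := iter n
  exact ⟨D, hD, hDA, hDpos, hDle.trans hn⟩




lemma my_exists_subset_measure_eq [IsFiniteMeasure μ]
    (C : MeasurableSpace Ω) (hCle : C ≤ m0)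
    (hCna : ∀ A : Set Ω, MeasurableSet[C] A → 0 < μ A →
      ∃ B : Set Ω, MeasurableSet[C] B ∧ B ⊆ A ∧ 0 < μ B ∧ μ B < μ A)
    (A : Set Ω) (hA : MeasurableSet[C] A) (t : ℝ≥0∞) (ht : t ≤ μ A) :
    ∃ E : Set Ω, MeasurableSet[C] E ∧ E ⊆ A ∧ μ E = t := by
  classical
  have htne : t ≠ ⊤ := (ht.trans_lt (measure_lt_top μ A)).ne
  -- the invariant of the construction
  set P : Set Ω → Prop := fun B => MeasurableSet[C] B ∧ B ⊆ A ∧ μ B ≤ t with hP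
  -- greedy step
  have key : ∀ B : Set Ω, P B → ∃ D : Set Ω, MeasurableSet[C] D ∧ D ⊆ A \ B ∧
      μ B + μ D ≤ t ∧
      ∀ D' : Set Ω, MeasurableSet[C] D' → D' ⊆ A \ B → μ B + μ D' ≤ t →
        μ D' ≤ 2 * μ D := by
    intro B hB
    set s : ℝ≥0∞ := ⨆ (D : Set Ω) (_ : MeasurableSet[C] D ∧ D ⊆ A \ B ∧ μ B + μ D ≤ t), μ D
      with hs
    have hle : ∀ D' : Set Ω, MeasurableSet[C] D' → D' ⊆ A \ B → μ B + μ D' ≤ t →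
        μ D' ≤ s := by
      intro D' h1 h2 h3
      exact le_iSup₂ (f := fun (D : Set Ω)
        (_ : MeasurableSet[C] D ∧ D ⊆ A \ B ∧ μ B + μ D ≤ t) => μ D) D' ⟨h1, h2, h3⟩
    have hstop : s ≤ t := by
      refine iSup₂_le fun D hD => ?_
      exact le_trans le_add_self hD.2.2
    rcases eq_or_ne s 0 with h0 | h0
    · refine ⟨∅, MeasurableSet.empty, empty_subset _, by simpa using hB.2.2, ?_⟩
      intro D' h1 h2 h3
      simpa [h0] using hle D' h1 h2 h3
    · have hstne : s ≠ ⊤ := (hstop.trans_lt (htne.lt_top)).ne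
      have hhalf : s / 2 < s := ENNReal.half_lt_self h0 hstne
      rw [hs] at hhalf
      obtain ⟨D, hD⟩ := lt_iSup_iff.mp hhalf
      obtain ⟨hDprop, hDlt⟩ := lt_iSup_iff.mp hD
      refine ⟨D, hDprop.1, hDprop.2.1, hDprop.2.2, ?_⟩
      intro D' h1 h2 h3
      have : s / 2 ≤ μ D := hDlt.le
      calc μ D' ≤ s := hle D' h1 h2 h3
        _ = 2 * (s / 2) := by rw [two_mul, ENNReal.add_halves]
        _ ≤ 2 * μ D := by gcongr
  choose step hstep1 hstep2 hstep3 hstep4 using key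
  -- the sequence
  let F : {B : Set Ω // P B} → {B : Set Ω // P B} := fun x =>
    ⟨x.1 ∪ step x.1 x.2, by
      obtain ⟨h1, h2, h3⟩ := x.2
      refine ⟨h1.union (hstep1 x.1 x.2), union_subset h2
        ((hstep2 x.1 x.2).trans diff_subset), ?_⟩
      refine le_trans (measure_union_le _ _) (hstep3 x.1 x.2)⟩
  let g : ℕ → {B : Set Ω // P B} := fun n => F^[n] ⟨∅, MeasurableSet.empty, empty_subset _,
    by simp⟩
  have hg_succ : ∀ n, g (n + 1) = F (g n) := fun n => Function.iterate_succ_apply' F n _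
  have hg_mono : ∀ n, (g n).1 ⊆ (g (n + 1)).1 := by
    intro n; rw [hg_succ n]; exact subset_union_left
  have hg_mono' : Monotone fun n => (g n).1 :=
    monotone_nat_of_le_succ hg_mono
  have hg_meas : ∀ n, MeasurableSet[C] (g n).1 := fun n => (g n).2.1
  -- measure of the step
  have hg_add : ∀ n, μ (g (n + 1)).1 = μ (g n).1 + μ (step (g n).1 (g n).2) := by
    intro n
    rw [hg_succ n]
    have hdisj : Disjoint (g n).1 (step (g n).1 (g n).2) :=
      (subset_diff.mp (hstep2 (g n).1 (g n).2)).2.symm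
    exact measure_union hdisj (hCle _ (hstep1 (g n).1 (g n).2))
  set E : Set Ω := ⋃ n, (g n).1 with hE
  have hEmeas : MeasurableSet[C] E := MeasurableSet.iUnion fun n => hg_meas n
  have hEA : E ⊆ A := iUnion_subset fun n => (g n).2.2.1
  have hEμ : μ E = ⨆ n, μ (g n).1 := Directed.measure_iUnion (hg_mono'.directed_le)
  have hEle : μ E ≤ t := by
    rw [hEμ]; exact iSup_le fun n => (g n).2.2.2
  refine ⟨E, hEmeas, hEA, le_antisymm hEle ?_⟩
  by_contra hlt
  push_neg at hlt
  -- find a small set in A \ E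
  have hAE : μ (A \ E) > 0 := by
    have : μ (A \ E) = μ A - μ E :=
      measure_diff hEA (hCle _ hEmeas).nullMeasurableSet (measure_ne_top μ E)
    rw [this]
    exact tsub_pos_of_lt (lt_of_lt_of_le hlt ht)
  obtain ⟨D₀, hD₀, hD₀sub, hD₀pos, hD₀le⟩ := my_exists_small_subset (m0 := m0) (μ := μ) C hCle hCna
    (A \ E) (hA.diff hEmeas) hAE (t - μ E) (tsub_pos_of_lt hlt)
  -- D₀ is admissible at every stage
  have hadm : ∀ n, μ D₀ ≤ 2 * μ (step (g n).1 (g n).2) := by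
    intro n
    refine hstep4 (g n).1 (g n).2 D₀ hD₀ (hD₀sub.trans ?_) ?_
    · exact diff_subset_diff_right (subset_iUnion (fun n => (g n).1) n)
    · calc μ (g n).1 + μ D₀ ≤ μ E + (t - μ E) :=
            add_le_add (measure_mono (subset_iUnion (fun n => (g n).1) n)) hD₀le
        _ = t := add_tsub_cancel_of_le hlt.le
  have hgrow : ∀ n, μ D₀ / 2 ≤ μ (step (g n).1 (g n).2) := by
    intro n
    have := hadm n
    calc μ D₀ / 2 ≤ 2 * μ (step (g n).1 (g n).2) / 2 := by gcongr
      _ = μ (step (g n).1 (g n).2) := by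
          rw [mul_comm, mul_div_assoc, ENNReal.div_self (by norm_num) (by norm_num), mul_one]
  have hlin : ∀ n : ℕ, (n : ℝ≥0∞) * (μ D₀ / 2) ≤ μ (g n).1 := by
    intro n
    induction n with
    | zero => simp
    | succ n ih =>
      rw [hg_add n]
      push_cast
      rw [add_mul, one_mul]
      exact add_le_add ih (hgrow n)
  have hD₀2pos : μ D₀ / 2 ≠ 0 := by
    simp only [ne_eq, ENNReal.div_eq_zero_iff]
    push_neg
    exact ⟨hD₀pos.ne', by norm_num⟩
  obtain ⟨n, hn⟩ := ENNReal.exists_nat_mul_gt hD₀2pos htne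
  have := (hlin n).trans (g n).2.2.2
  exact absurd this (by simpa [mul_comm] using hn.not_ge)

end MeasAux


/-- points whose first backward hitting time of `B` is `j` -/
def qlev (T : Equiv.Perm Ω) (B : Set Ω) (j : ℕ) : Set Ω :=
  {x | (⇑T.symm)^[j] x ∈ B ∧ ∀ i < j, (⇑T.symm)^[i] x ∉ B}

/-- points whose first forward return time to `B` is `m` -/
def qret (T : Equiv.Perm Ω) (B : Set Ω) (m : ℕ) : Set Ω :=
  {x | (⇑T)^[m] x ∈ B ∧ ∀ i, 0 < i → i < m → (⇑T)^[i] x ∉ B}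

/-- level `j` of the tower of height `R` over `B` -/
def qcell (T : Equiv.Perm Ω) (B : Set Ω) (R j : ℕ) : Set Ω :=
  if j < R then qlev T B j ∩ qret T B (R - j) else ∅

variable {T : Equiv.Perm Ω} {B : Set Ω}

lemma mem_qcell_iff {R j : ℕ} {x : Ω} :
    x ∈ qcell T B R j ↔ j < R ∧ x ∈ qlev T B j ∧ x ∈ qret T B (R - j) := by
  by_cases h : j < R <;> simp [qcell, h]

lemma qlev_zero : qlev T B 0 = B := by
  ext x; simp [qlev]

lemma qcell_subset_B {R : ℕ} : qcell T B R 0 ⊆ B := by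
  intro x hx
  rw [mem_qcell_iff] at hx
  have := hx.2.1
  rwa [qlev_zero] at this

/-- levels are uniquely determined -/
lemma qlev_inj {j j' : ℕ} {x : Ω} (h : x ∈ qlev T B j) (h' : x ∈ qlev T B j') : j = j' := by
  rcases Nat.lt_trichotomy j j' with hlt | heq | hgt
  · exact absurd h.1 (h'.2 j hlt)
  · exact heq
  · exact absurd h'.1 (h.2 j' hgt)

lemma qret_inj {m m' : ℕ} {x : Ω} (hm : 0 < m) (hm' : 0 < m')
    (h : x ∈ qret T B m) (h' : x ∈ qret T B m') : m = m' := by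
  rcases Nat.lt_trichotomy m m' with hlt | heq | hgt
  · exact absurd h.1 (h'.2 m hm hlt)
  · exact heq
  · exact absurd h'.1 (h.2 m' hm' hgt)

lemma qcell_pairwise_disjoint :
    Pairwise (Function.onFun Disjoint fun p : ℕ × ℕ => qcell T B p.1 p.2) := by
  intro p q hpq
  rw [Function.onFun, Set.disjoint_left]
  intro x hx hx'
  rw [mem_qcell_iff] at hx hx'
  obtain ⟨h1, h2, h3⟩ := hx
  obtain ⟨h1', h2', h3'⟩ := hx'
  have hj : p.2 = q.2 := qlev_inj h2 h2'
  have hm : p.1 - p.2 = q.1 - q.2 := by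
    refine qret_inj ?_ ?_ h3 h3' <;> omega
  exact hpq (Prod.ext (by omega) hj)

/-- the key dynamical identity: `T` shifts levels by one -/
lemma qcell_preimage {R j : ℕ} (h : j + 1 < R) :
    qcell T B R j = ⇑T ⁻¹' qcell T B R (j + 1) := by
  have hTS : ∀ y : Ω, T (T.symm y) = y := fun y => T.apply_symm_apply y
  have hST : ∀ y : Ω, T.symm (T y) = y := fun y => T.symm_apply_apply y
  ext x
  simp only [Set.mem_preimage, mem_qcell_iff]
  constructor
  · rintro ⟨hjR, ⟨hl1, hl2⟩, hr1, hr2⟩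
    have hm2 : 2 ≤ R - j := by omega
    have hTxB : T x ∉ B := by
      have := hr2 1 (by norm_num) (by omega)
      simpa using this
    refine ⟨h, ⟨?_, ?_⟩, ?_, ?_⟩
    · rw [Function.iterate_succ_apply, hST]; exact hl1
    · intro i hi
      rcases Nat.eq_zero_or_pos i with h0 | h0
      · subst h0; simpa using hTxB
      · obtain ⟨i', rfl⟩ : ∃ i', i = i' + 1 := ⟨i - 1, by omega⟩
        rw [Function.iterate_succ_apply, hST]
        exact hl2 i' (by omega)
    · rw [← Function.iterate_succ_apply]
      have hmm : (R - (j + 1)).succ = R - j := by omega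
      rw [hmm]
      exact hr1
    · intro i h0 hi
      have := hr2 (i + 1) (by omega) (by omega)
      rwa [Function.iterate_succ_apply] at this
  · rintro ⟨hjR, ⟨hl1, hl2⟩, hr1, hr2⟩
    refine ⟨by omega, ⟨?_, ?_⟩, ?_, ?_⟩
    · rw [Function.iterate_succ_apply, hST] at hl1; exact hl1
    · intro i hi
      have := hl2 (i + 1) (by omega)
      rwa [Function.iterate_succ_apply, hST] at this
    · have hmm : R - j = (R - (j + 1)) + 1 := by omega
      rw [hmm, Function.iterate_succ_apply]
      exact hr1
    · intro i h0 hi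
      rcases Nat.eq_or_lt_of_le h0 with h1 | h1
      · have : (0:ℕ) < j + 1 := by omega
        have hy := hl2 0 this
        simp only [Function.iterate_zero, id] at hy
        rw [← h1]
        simpa using hy
      · obtain ⟨i', rfl⟩ : ∃ i', i = i' + 1 := ⟨i - 1, by omega⟩
        have := hr2 i' (by omega) (by omega)
        rw [Function.iterate_succ_apply]
        exact this


lemma qcell_empty {T : Equiv.Perm Ω} {B : Set Ω} {R j : ℕ} (h : ¬ j < R) :
    qcell T B R j = ∅ := by simp [qcell, h]

lemma qret_one_mem {T : Equiv.Perm Ω} {B : Set Ω} {x : Ω} (h : x ∈ qret T B 1) : T x ∈ B := by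
  have := h.1
  simpa using this

lemma qmem_cell_of_hitting {T : Equiv.Perm Ω} {B : Set Ω} {x : Ω}
    (h1 : ∃ k, (⇑T.symm)^[k] x ∈ B) (h2 : ∃ k, (⇑T)^[k + 1] x ∈ B) :
    ∃ p : ℕ × ℕ, x ∈ qcell T B p.1 p.2 := by
  classical
  set j := Nat.find h1 with hj
  set k := Nat.find h2 with hk
  refine ⟨(j + (k + 1), j), ?_⟩
  rw [mem_qcell_iff]
  refine ⟨by omega, ⟨Nat.find_spec h1, fun i hi => Nat.find_min h1 hi⟩, ?_, ?_⟩
  · have hjk : j + (k + 1) - j = k + 1 := by omega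
    rw [hjk]
    exact Nat.find_spec h2
  · intro i h0 hilt
    have hjk : j + (k + 1) - j = k + 1 := by omega
    rw [hjk] at hilt
    obtain ⟨i', rfl⟩ : ∃ i', i = i' + 1 := ⟨i - 1, by omega⟩
    exact Nat.find_min h2 (by omega)

section Meas
variable [m0 : MeasurableSpace Ω] {μ : Measure Ω}

/-- preimages under `T` and `T.symm` stay in `C` -/
lemma qpre_T {C : MeasurableSpace Ω} (hCT : MeasurableSpace.comap T C = C)
    {S : Set Ω} (hS : MeasurableSet[C] S) : MeasurableSet[C] (⇑T ⁻¹' S) := by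
  rw [← hCT]
  exact ⟨S, hS, rfl⟩

lemma qpre_Tsymm {C : MeasurableSpace Ω} (hCT : MeasurableSpace.comap T C = C)
    {S : Set Ω} (hS : MeasurableSet[C] S) : MeasurableSet[C] (⇑T.symm ⁻¹' S) := by
  rw [← hCT] at hS
  obtain ⟨S', hS', rfl⟩ := hS
  have : ⇑T.symm ⁻¹' (⇑T ⁻¹' S') = S' := by
    rw [← Set.preimage_comp]
    simp
  rwa [this]

lemma qpre_T_iter {C : MeasurableSpace Ω} (hCT : MeasurableSpace.comap T C = C)
    (k : ℕ) {S : Set Ω} (hS : MeasurableSet[C] S) : MeasurableSet[C] ((⇑T)^[k] ⁻¹' S) := by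
  induction k generalizing S with
  | zero => simpa using hS
  | succ k ih =>
    rw [Function.iterate_succ']
    rw [Set.preimage_comp]
    exact ih (qpre_T hCT hS)

lemma qpre_Tsymm_iter {C : MeasurableSpace Ω} (hCT : MeasurableSpace.comap T C = C)
    (k : ℕ) {S : Set Ω} (hS : MeasurableSet[C] S) :
    MeasurableSet[C] ((⇑T.symm)^[k] ⁻¹' S) := by
  induction k generalizing S with
  | zero => simpa using hS
  | succ k ih =>
    rw [Function.iterate_succ']
    rw [Set.preimage_comp]
    exact ih (qpre_Tsymm hCT hS)

lemma qlev_measurable {C : MeasurableSpace Ω} (hCT : MeasurableSpace.comap T C = C)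
    (hB : MeasurableSet[C] B) (j : ℕ) : MeasurableSet[C] (qlev T B j) := by
  have : qlev T B j = ((⇑T.symm)^[j] ⁻¹' B) ∩ ⋂ i ∈ Finset.range j, ((⇑T.symm)^[i] ⁻¹' B)ᶜ := by
    ext x; simp [qlev]
  rw [this]
  exact (qpre_Tsymm_iter hCT j hB).inter
    (MeasurableSet.biInter (Finset.range j).countable_toSet
      fun i _ => (qpre_Tsymm_iter hCT i hB).compl)

lemma qret_measurable {C : MeasurableSpace Ω} (hCT : MeasurableSpace.comap T C = C)
    (hB : MeasurableSet[C] B) (m : ℕ) : MeasurableSet[C] (qret T B m) := by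
  have : qret T B m = ((⇑T)^[m] ⁻¹' B) ∩
      ⋂ i ∈ Finset.range m, ⋂ (_ : 0 < i), ((⇑T)^[i] ⁻¹' B)ᶜ := by
    ext x; simp only [qret, Set.mem_inter_iff, Set.mem_setOf_eq, Set.mem_iInter,
      Finset.mem_range, Set.mem_compl_iff, Set.mem_preimage]
    tauto
  rw [this]
  refine (qpre_T_iter hCT m hB).inter
    (MeasurableSet.biInter (Finset.range m).countable_toSet fun i _ => ?_)
  exact MeasurableSet.iInter fun _ => (qpre_T_iter hCT i hB).compl

lemma qcell_measurable {C : MeasurableSpace Ω} (hCT : MeasurableSpace.comap T C = C)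
    (hB : MeasurableSet[C] B) (R j : ℕ) : MeasurableSet[C] (qcell T B R j) := by
  unfold qcell
  split
  · exact (qlev_measurable hCT hB j).inter (qret_measurable hCT hB (R - j))
  · exact MeasurableSet.empty

/-- measure-preservation of the inverse -/
lemma qmp_symm (hT : Measurable T) (hTinv : Measurable T.symm)
    (hTmp : MeasurePreserving T μ μ) : MeasurePreserving ⇑T.symm μ μ := by
  refine ⟨hTinv, ?_⟩
  calc μ.map ⇑T.symm = (μ.map ⇑T).map ⇑T.symm := by rw [hTmp.map_eq]
    _ = μ.map (⇑T.symm ∘ ⇑T) := Measure.map_map hTinv hT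
    _ = μ.map id := by rw [Equiv.symm_comp_self]
    _ = μ := μ.map_id

/-- all levels of a tower have the same measure -/
lemma qcell_measure_eq (hTmp : MeasurePreserving T μ μ)
    (hmeas : ∀ R j : ℕ, MeasurableSet (qcell T B R j)) (R : ℕ) :
    ∀ j, j < R → μ (qcell T B R j) = μ (qcell T B R 0) := by
  intro j
  induction j with
  | zero => intro _; rfl
  | succ j ih =>
    intro hj
    have h := qcell_preimage (T := T) (B := B) (R := R) (j := j) hj
    calc μ (qcell T B R (j + 1))
        = μ (⇑T ⁻¹' qcell T B R (j + 1)) :=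
          (hTmp.measure_preimage (hmeas R (j + 1)).nullMeasurableSet).symm
      _ = μ (qcell T B R j) := by rw [← h]
      _ = μ (qcell T B R 0) := ih (by omega)

/-- the sweep-out lemma: forward hitting of a positive-measure set is a.s. -/
lemma qsweep [IsProbabilityMeasure μ] (hT : Measurable T) (hTinv : Measurable T.symm)
    (hTmp : MeasurePreserving T μ μ)
    (herg : ∀ A : Set Ω, MeasurableSet A → ⇑T ⁻¹' A = A → μ A = 0 ∨ μ A = 1)
    (hB : MeasurableSet B) (hBpos : 0 < μ B) :
    μ (⋃ k, (⇑T)^[k] ⁻¹' B) = 1 := by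
  set V : Set Ω := ⋃ k, (⇑T)^[k] ⁻¹' B with hV
  have hVmeas : MeasurableSet V := MeasurableSet.iUnion fun k => (hT.iterate k) hB
  have hBV : B ⊆ V := by
    intro x hx
    exact Set.mem_iUnion.2 ⟨0, by simpa using hx⟩
  have hVsub : V ⊆ ⇑T.symm ⁻¹' V := by
    intro y hy
    obtain ⟨k, hk⟩ := Set.mem_iUnion.1 hy
    refine Set.mem_preimage.2 (Set.mem_iUnion.2 ⟨k + 1, ?_⟩)
    simp only [Set.mem_preimage] at hk ⊢
    rw [Function.iterate_succ_apply, T.apply_symm_apply]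
    exact hk
  set W : Set Ω := ⋃ n, (⇑T.symm)^[n] ⁻¹' V with hW
  have hWmeas : MeasurableSet W := MeasurableSet.iUnion fun n => (hTinv.iterate n) hVmeas
  have hmono : Monotone fun n => (⇑T.symm)^[n] ⁻¹' V := by
    refine monotone_nat_of_le_succ fun n => ?_
    intro x hx
    simp only [Set.mem_preimage] at hx ⊢
    rw [Function.iterate_succ_apply']
    exact hVsub hx
  have hWinv : ⇑T ⁻¹' W = W := by
    ext x
    simp only [Set.mem_preimage]
    constructor
    · intro hx
      obtain ⟨n, hn⟩ := Set.mem_iUnion.1 hx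
      simp only [Set.mem_preimage] at hn
      rcases n with _ | n'
      · simp only [Function.iterate_zero, id] at hn
        have : x ∈ V := by
          obtain ⟨k, hk⟩ := Set.mem_iUnion.1 hn
          simp only [Set.mem_preimage] at hk
          exact Set.mem_iUnion.2 ⟨k + 1, by
            simp only [Set.mem_preimage]
            rwa [Function.iterate_succ_apply]⟩
        exact Set.mem_iUnion.2 ⟨0, by simpa using this⟩
      · rw [Function.iterate_succ_apply, T.symm_apply_apply] at hn
        exact Set.mem_iUnion.2 ⟨n', hn⟩
    · intro hx
      obtain ⟨n, hn⟩ := Set.mem_iUnion.1 hx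
      simp only [Set.mem_preimage] at hn
      refine Set.mem_iUnion.2 ⟨n + 1, ?_⟩
      simp only [Set.mem_preimage]
      rwa [Function.iterate_succ_apply, T.symm_apply_apply]
  have hVW : V ⊆ W := by
    intro x hx
    exact Set.mem_iUnion.2 ⟨0, by simpa using hx⟩
  have hW1 : μ W = 1 := by
    rcases herg W hWmeas hWinv with h0 | h1
    · exact absurd h0 (by
        have : 0 < μ W := lt_of_lt_of_le hBpos (measure_mono (hBV.trans hVW))
        exact this.ne')
    · exact h1
  have hmp : MeasurePreserving ⇑T.symm μ μ := qmp_symm hT hTinv hTmp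
  have hWV : μ W = μ V := by
    rw [hW]
    rw [Directed.measure_iUnion hmono.directed_le]
    have h2 : ∀ n : ℕ, μ ((⇑T.symm)^[n] ⁻¹' V) = μ V := fun n =>
      (hmp.iterate n).measure_preimage hVmeas.nullMeasurableSet
    calc (⨆ n, μ ((⇑T.symm)^[n] ⁻¹' V)) = ⨆ _ : ℕ, μ V := iSup_congr h2
      _ = μ V := iSup_const
  rw [← hWV, hW1]

end Meas

end QuasiInvariantAux

/-- Lemma 1: In an ergodic dynamical system, if `𝒞` is a `T`-invariant
sub-σ-algebra on which `μ` is non-atomic, then for every `N ∈ ℕ`, `0 < ρ < 1` and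
`ε > 0` there is a set `A ∈ 𝒞` with `μ(A) = ρ` and
`μ(T^{-i}A Δ T^{-j}A) ≤ ε` for all `i, j ∈ {0, …, N}`. -/
theorem exists_quasi_invariant_set
    {Ω : Type*} [m0 : MeasurableSpace Ω] (μ : Measure Ω) [IsProbabilityMeasure μ]
    (T : Equiv.Perm Ω) (hT : Measurable T) (hTinv : Measurable T.symm)
    (hTmp : MeasurePreserving T μ μ)
    (herg : ∀ A : Set Ω, MeasurableSet A → ⇑T ⁻¹' A = A → μ A = 0 ∨ μ A = 1)
    (C : MeasurableSpace Ω) (hCle : C ≤ m0)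
    (hCT : MeasurableSpace.comap T C = C)
    (hCna : ∀ A : Set Ω, MeasurableSet[C] A → 0 < μ A →
      ∃ B : Set Ω, MeasurableSet[C] B ∧ B ⊆ A ∧ 0 < μ B ∧ μ B < μ A)
    (N : ℕ) (ρ : ℝ) (hρ0 : 0 < ρ) (hρ1 : ρ < 1) (ε : ℝ) (hε : 0 < ε) :
    ∃ A : Set Ω, MeasurableSet[C] A ∧ μ A = ENNReal.ofReal ρ ∧
      ∀ i ≤ N, ∀ j ≤ N,
        μ (symmDiff (⇑(T ^ i) ⁻¹' A) (⇑(T ^ j) ⁻¹' A)) ≤ ENNReal.ofReal ε := by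
  classical
  set δ : ℝ≥0∞ := ENNReal.ofReal (ε / (4 * (N + 1))) with hδ
  have hδpos : 0 < δ := by
    rw [hδ, ENNReal.ofReal_pos]
    positivity
  obtain ⟨B, hBC, -, hBpos, hBle⟩ := my_exists_small_subset (m0 := m0) (μ := μ) C hCle hCna
    Set.univ MeasurableSet.univ (by simp) δ hδpos
  have hBm0 : MeasurableSet[m0] B := hCle _ hBC
  -- helpers avoiding instance resolution picking `C` over `m0`
  have hiterate : ∀ k : ℕ, @MeasurePreserving Ω Ω m0 m0 ((⇑T)^[k]) μ μ := fun k =>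
    @MeasurePreserving.iterate Ω m0 μ ⇑T hTmp k
  have hpreT : ∀ {s : Set Ω}, MeasurableSet[m0] s → μ (⇑T ⁻¹' s) = μ s := by
    intro s hs
    exact @MeasurePreserving.measure_preimage Ω Ω m0 m0 μ μ ⇑T hTmp s
      (@MeasurableSet.nullMeasurableSet Ω m0 μ s hs)
  have hpreIter : ∀ (k : ℕ) {s : Set Ω}, MeasurableSet[m0] s → μ ((⇑T)^[k] ⁻¹' s) = μ s := by
    intro k s hs
    exact @MeasurePreserving.measure_preimage Ω Ω m0 m0 μ μ ((⇑T)^[k]) (hiterate k) s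
      (@MeasurableSet.nullMeasurableSet Ω m0 μ s hs)
  -- the cells and their basic properties
  have hcellC : ∀ R j : ℕ, MeasurableSet[C] (qcell T B R j) := qcell_measurable hCT hBC
  have hcellm : ∀ R j : ℕ, MeasurableSet[m0] (qcell T B R j) := fun R j => hCle _ (hcellC R j)
  have hdisj := qcell_pairwise_disjoint (T := T) (B := B)
  set b : ℕ → ℝ≥0∞ := fun R => μ (qcell T B R 0) with hb
  have hmc : ∀ R j : ℕ, j < R → μ (qcell T B R j) = b R := fun R j h =>
    qcell_measure_eq (m0 := m0) hTmp hcellm R j h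
  -- the good set G
  set G : Set Ω := ⋃ p : ℕ × ℕ, qcell T B p.1 p.2 with hG
  have hGC : MeasurableSet[C] G := MeasurableSet.iUnion fun p => hcellC p.1 p.2
  have hGm : MeasurableSet[m0] G := hCle _ hGC
  -- μ G = 1
  have hG1 : μ G = 1 := by
    have herg' : ∀ A : Set Ω, MeasurableSet[m0] A → ⇑T.symm ⁻¹' A = A → μ A = 0 ∨ μ A = 1 := by
      intro A hA hinv
      refine herg A hA ?_
      have : ⇑T ⁻¹' A = ⇑T ⁻¹' (⇑T.symm ⁻¹' A) := by rw [hinv]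
      rw [this, ← Set.preimage_comp, Equiv.symm_comp_self, Set.preimage_id]
    have hX : μ (⋃ k, (⇑T.symm)^[k] ⁻¹' B) = 1 := by
      have hTss : @Measurable Ω Ω m0 m0 ⇑T.symm.symm := by simpa using hT
      have := qsweep (m0 := m0) (T := T.symm) hTinv hTss
        (qmp_symm (m0 := m0) hT hTinv hTmp) (by simpa using herg') hBm0 hBpos
      exact this
    have hV : μ (⋃ k, (⇑T)^[k] ⁻¹' B) = 1 := qsweep (m0 := m0) hT hTinv hTmp herg hBm0 hBpos
    set X : Set Ω := ⋃ k, (⇑T.symm)^[k] ⁻¹' B with hXdef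
    set V : Set Ω := ⋃ k, (⇑T)^[k] ⁻¹' B with hVdef
    set Y : Set Ω := ⇑T ⁻¹' V with hYdef
    have hXm : MeasurableSet[m0] X := MeasurableSet.iUnion fun k => (hTinv.iterate k) hBm0
    have hVm : MeasurableSet[m0] V := MeasurableSet.iUnion fun k => (hT.iterate k) hBm0
    have hYm : MeasurableSet[m0] Y := hT hVm
    have hY : μ Y = 1 := by
      rw [hYdef, hpreT hVm, hV]
    -- X ∩ Y ⊆ G
    have hXYG : X ∩ Y ⊆ G := by
      rintro x ⟨hx1, hx2⟩
      have h1 : ∃ k, (⇑T.symm)^[k] x ∈ B := by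
        obtain ⟨k, hk⟩ := Set.mem_iUnion.1 hx1
        exact ⟨k, hk⟩
      have h2 : ∃ k, (⇑T)^[k + 1] x ∈ B := by
        have : T x ∈ V := hx2
        obtain ⟨k, hk⟩ := Set.mem_iUnion.1 this
        refine ⟨k, ?_⟩
        rw [Function.iterate_succ_apply]
        exact hk
      obtain ⟨p, hp⟩ := qmem_cell_of_hitting h1 h2
      exact Set.mem_iUnion.2 ⟨p, hp⟩
    have hXc : μ Xᶜ = 0 := by
      rw [measure_compl hXm (measure_ne_top μ X), hX]
      simp
    have hYc : μ Yᶜ = 0 := by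
      rw [measure_compl hYm (measure_ne_top μ Y), hY]
      simp
    refine le_antisymm prob_le_one ?_
    calc (1 : ℝ≥0∞) = μ Set.univ := measure_univ.symm
      _ ≤ μ (X ∩ Y) + μ ((X ∩ Y)ᶜ) := by
          rw [← Set.union_compl_self (X ∩ Y)]
          exact measure_union_le _ _
      _ ≤ μ (X ∩ Y) + (μ Xᶜ + μ Yᶜ) := by
          gcongr
          rw [Set.compl_inter]
          exact measure_union_le _ _
      _ = μ (X ∩ Y) := by rw [hXc, hYc]; simp
      _ ≤ μ G := measure_mono hXYG
  have hGc0 : μ Gᶜ = 0 := by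
    rw [measure_compl hGm (measure_ne_top μ G), hG1]
    simp
  -- sums
  have hGsum : ∑' p : ℕ × ℕ, μ (qcell T B p.1 p.2) = 1 := by
    rw [← measure_iUnion hdisj fun p => hcellm p.1 p.2]
    exact hG1
  have hRow : ∀ R : ℕ, ∑' j : ℕ, μ (qcell T B R j) = (R : ℝ≥0∞) * b R := by
    intro R
    rw [tsum_eq_sum (s := Finset.range R) (f := fun j => μ (qcell T B R j))
      (fun j hj => by
        show μ (qcell T B R j) = 0
        rw [qcell_empty (by simpa using hj)]; simp)]
    rw [Finset.sum_congr rfl fun j hj => hmc R j (Finset.mem_range.mp hj)]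
    simp [Finset.sum_const, Finset.card_range, nsmul_eq_mul]
  have hGsum2 : ∑' (p : ℕ × ℕ), μ (qcell T B p.1 p.2) =
      ∑' (R : ℕ) (j : ℕ), μ (qcell T B R j) :=
    ENNReal.tsum_prod' (f := fun p => μ (qcell T B p.1 p.2))
  have hsum1 : ∑' R : ℕ, (R : ℝ≥0∞) * b R = 1 := by
    rw [← hGsum, hGsum2]
    exact (tsum_congr hRow).symm
  have hBrows : ∑' R : ℕ, b R ≤ μ B := by
    have hd0 : Pairwise (Function.onFun Disjoint fun R : ℕ => qcell T B R 0) := by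
      intro R R' hRR
      exact hdisj (show ((R, 0) : ℕ × ℕ) ≠ (R', 0) by simp [hRR])
    have : ∑' R : ℕ, b R = μ (⋃ R : ℕ, qcell T B R 0) := by
      rw [measure_iUnion hd0 fun R => hcellm R 0]
    rw [this]
    exact measure_mono (Set.iUnion_subset fun R => qcell_subset_B)
  -- the ceiling counts
  set c : ℕ → ℕ := fun R => ⌈ρ * R⌉₊ with hc
  have hcleR : ∀ R : ℕ, c R ≤ R := by
    intro R
    rw [hc]
    refine Nat.ceil_le.2 ?_
    calc ρ * R ≤ 1 * R := by
          have : (0:ℝ) ≤ (R:ℝ) := Nat.cast_nonneg R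
          nlinarith
      _ = R := one_mul _
  have hclow : ∀ R : ℕ, ENNReal.ofReal ρ * (R : ℝ≥0∞) ≤ (c R : ℝ≥0∞) := by
    intro R
    rw [← ENNReal.ofReal_natCast R, ← ENNReal.ofReal_mul hρ0.le, ← ENNReal.ofReal_natCast (c R)]
    exact ENNReal.ofReal_le_ofReal (Nat.le_ceil _)
  have hchigh : ∀ R : ℕ, (c R : ℝ≥0∞) ≤ ENNReal.ofReal ρ * (R : ℝ≥0∞) + 1 := by
    intro R
    rw [← ENNReal.ofReal_natCast R, ← ENNReal.ofReal_mul hρ0.le, ← ENNReal.ofReal_natCast (c R),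
      ← ENNReal.ofReal_one, ← ENNReal.ofReal_add (by positivity) zero_le_one]
    refine ENNReal.ofReal_le_ofReal ?_
    exact (Nat.ceil_lt_add_one (by positivity)).le
  -- the selected set A₀
  set sel : ℕ × ℕ → Set Ω := fun p => if p.2 < c p.1 then qcell T B p.1 p.2 else ∅ with hsel
  have hselsub : ∀ p : ℕ × ℕ, sel p ⊆ qcell T B p.1 p.2 := by
    intro p
    rw [hsel]
    dsimp only
    split
    · exact subset_rfl
    · exact Set.empty_subset _
  have hselC : ∀ p : ℕ × ℕ, MeasurableSet[C] (sel p) := by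
    intro p
    rw [hsel]
    dsimp only
    split
    · exact hcellC p.1 p.2
    · exact MeasurableSet.empty
  have hselm : ∀ p : ℕ × ℕ, MeasurableSet[m0] (sel p) := fun p => hCle _ (hselC p)
  have hseldisj : Pairwise (Function.onFun Disjoint sel) := fun p q hpq =>
    (hdisj hpq).mono (hselsub p) (hselsub q)
  set A₀ : Set Ω := ⋃ p : ℕ × ℕ, sel p with hA₀
  have hA₀C : MeasurableSet[C] A₀ := MeasurableSet.iUnion hselC
  have hA₀m : MeasurableSet[m0] A₀ := hCle _ hA₀C
  have hA₀sum : μ A₀ = ∑' R : ℕ, (c R : ℝ≥0∞) * b R := by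
    rw [hA₀, measure_iUnion hseldisj hselm,
      ENNReal.tsum_prod' (f := fun p => μ (sel p))]
    refine tsum_congr fun R => ?_
    rw [tsum_eq_sum (s := Finset.range (c R)) (f := fun j => μ (sel (R, j)))
      (fun j hj => by
        show μ (sel (R, j)) = 0
        rw [hsel]
        dsimp only
        rw [if_neg (by simpa using hj)]
        simp)]
    have hterm : ∀ j ∈ Finset.range (c R), μ (sel (R, j)) = b R := by
      intro j hj
      have hjc : j < c R := Finset.mem_range.mp hj
      rw [hsel]
      dsimp only
      rw [if_pos hjc]
      exact hmc R j (lt_of_lt_of_le hjc (hcleR R))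
    rw [Finset.sum_congr rfl hterm]
    simp [Finset.sum_const, Finset.card_range, nsmul_eq_mul]
  have hlow : ENNReal.ofReal ρ ≤ μ A₀ := by
    rw [hA₀sum]
    calc ENNReal.ofReal ρ = ENNReal.ofReal ρ * ∑' R : ℕ, (R : ℝ≥0∞) * b R := by
          rw [hsum1, mul_one]
      _ = ∑' R : ℕ, ENNReal.ofReal ρ * ((R : ℝ≥0∞) * b R) := ENNReal.tsum_mul_left.symm
      _ ≤ ∑' R : ℕ, (c R : ℝ≥0∞) * b R := by
          refine ENNReal.tsum_le_tsum fun R => ?_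
          rw [← mul_assoc]
          exact mul_le_mul_left (hclow R) _
  have hup : μ A₀ ≤ ENNReal.ofReal ρ + μ B := by
    rw [hA₀sum]
    calc ∑' R : ℕ, (c R : ℝ≥0∞) * b R
        ≤ ∑' R : ℕ, (ENNReal.ofReal ρ * ((R : ℝ≥0∞) * b R) + b R) := by
          refine ENNReal.tsum_le_tsum fun R => ?_
          calc (c R : ℝ≥0∞) * b R ≤ (ENNReal.ofReal ρ * (R : ℝ≥0∞) + 1) * b R :=
                mul_le_mul_left (hchigh R) _
            _ = ENNReal.ofReal ρ * ((R : ℝ≥0∞) * b R) + b R := by ring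
      _ = ENNReal.ofReal ρ * ∑' R : ℕ, ((R : ℝ≥0∞) * b R) + ∑' R : ℕ, b R := by
          rw [ENNReal.tsum_add, ENNReal.tsum_mul_left]
      _ ≤ ENNReal.ofReal ρ * 1 + μ B := by
          rw [hsum1]
          exact add_le_add le_rfl hBrows
      _ = ENNReal.ofReal ρ + μ B := by rw [mul_one]
  -- the boundary set D
  set D : Set Ω := ⋃ R : ℕ, qcell T B R (c R - 1) with hD
  have hDle : μ D ≤ μ B := by
    calc μ D ≤ ∑' R : ℕ, μ (qcell T B R (c R - 1)) := measure_iUnion_le _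
      _ ≤ ∑' R : ℕ, b R := by
          refine ENNReal.tsum_le_tsum fun R => ?_
          by_cases h : c R - 1 < R
          · rw [hmc R _ h]
          · rw [qcell_empty h]
            simp
      _ ≤ μ B := hBrows
  -- membership characterisation
  have hmemA₀ : ∀ (x : Ω) (R j : ℕ), x ∈ qcell T B R j → (x ∈ A₀ ↔ j < c R) := by
    intro x R j hx
    constructor
    · intro hxA
      obtain ⟨p, hp⟩ := Set.mem_iUnion.1 hxA
      have hpq : p = (R, j) := by
        by_contra hne
        exact Set.disjoint_left.1 (hdisj hne) (hselsub p hp) hx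
      subst hpq
      rw [hsel] at hp
      dsimp only at hp
      by_cases hcond : j < c R
      · exact hcond
      · rw [if_neg hcond] at hp
        exact absurd hp (Set.notMem_empty x)
    · intro hj
      refine Set.mem_iUnion.2 ⟨(R, j), ?_⟩
      rw [hsel]
      dsimp only
      rw [if_pos hj]
      exact hx
  -- the key symmetric difference bound for A₀
  have hsd0 : symmDiff A₀ (⇑T ⁻¹' A₀) ⊆ Gᶜ ∪ (⇑T ⁻¹' Gᶜ) ∪ (⇑T ⁻¹' B) ∪ D := by
    intro x hx
    simp only [Set.mem_union, Set.mem_preimage, Set.mem_compl_iff]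
    by_cases h1 : x ∈ G
    swap
    · tauto
    by_cases h2 : T x ∈ G
    swap
    · tauto
    by_cases h3 : T x ∈ B
    · tauto
    by_cases h4 : x ∈ D
    · tauto
    exfalso
    obtain ⟨p, hp⟩ := Set.mem_iUnion.1 h1
    obtain ⟨R, j⟩ := p
    have hjR : j < R := (mem_qcell_iff.1 hp).1
    have hj1 : j + 1 < R := by
      by_contra hcon
      have hRj : R - j = 1 := by omega
      have hxr : x ∈ qret T B 1 := by
        have := (mem_qcell_iff.1 hp).2.2
        rwa [hRj] at this
      exact h3 (qret_one_mem hxr)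
    have hTx : T x ∈ qcell T B R (j + 1) := by
      have := hp
      rw [qcell_preimage hj1] at this
      exact this
    have hiff1 := hmemA₀ x R j hp
    have hiff2 := hmemA₀ (T x) R (j + 1) hTx
    rw [Set.mem_symmDiff] at hx
    have hnj : j ≠ c R - 1 := by
      intro hje
      apply h4
      rw [hD]
      refine Set.mem_iUnion.2 ⟨R, ?_⟩
      rwa [← hje]
    rcases hx with ⟨hxa, hxb⟩ | ⟨hxa, hxb⟩
    · rw [Set.mem_preimage, hiff2] at hxb
      rw [hiff1] at hxa
      omega
    · rw [Set.mem_preimage, hiff2] at hxa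
      rw [hiff1] at hxb
      omega
  have hsd0' : μ (symmDiff A₀ (⇑T ⁻¹' A₀)) ≤ 2 * μ B := by
    calc μ (symmDiff A₀ (⇑T ⁻¹' A₀)) ≤ μ (Gᶜ ∪ (⇑T ⁻¹' Gᶜ) ∪ (⇑T ⁻¹' B) ∪ D) :=
          measure_mono hsd0
      _ ≤ μ (Gᶜ ∪ (⇑T ⁻¹' Gᶜ) ∪ (⇑T ⁻¹' B)) + μ D := measure_union_le _ _
      _ ≤ (μ (Gᶜ ∪ (⇑T ⁻¹' Gᶜ)) + μ (⇑T ⁻¹' B)) + μ D := by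
          gcongr
          exact measure_union_le _ _
      _ ≤ ((μ Gᶜ + μ (⇑T ⁻¹' Gᶜ)) + μ (⇑T ⁻¹' B)) + μ D := by
          gcongr
          exact measure_union_le _ _
      _ = ((0 + 0) + μ B) + μ D := by
          rw [hGc0, hpreT hGm.compl, hGc0, hpreT hBm0]
      _ ≤ ((0 + 0) + μ B) + μ B := by gcongr
      _ = 2 * μ B := by ring
  -- correct the measure
  obtain ⟨E, hEC, hEsub, hEμ⟩ := my_exists_subset_measure_eq (m0 := m0) (μ := μ) C hCle hCna
    A₀ hA₀C (μ A₀ - ENNReal.ofReal ρ) tsub_le_self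
  have hEm : MeasurableSet[m0] E := hCle _ hEC
  set A : Set Ω := A₀ \ E with hA
  have hAC : MeasurableSet[C] A := hA₀C.diff hEC
  have hAm : MeasurableSet[m0] A := hCle _ hAC
  have hAμ : μ A = ENNReal.ofReal ρ := by
    rw [hA, measure_diff hEsub hEm.nullMeasurableSet (measure_ne_top μ E), hEμ]
    exact ENNReal.sub_sub_cancel (measure_ne_top μ A₀) hlow
  have hEle : μ E ≤ μ B := by
    rw [hEμ]
    rw [tsub_le_iff_right]
    rwa [add_comm]
  -- symmetric difference bound for A
  have hsd1 : μ (symmDiff A (⇑T ⁻¹' A)) ≤ 4 * μ B := by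
    have hincl : symmDiff A (⇑T ⁻¹' A) ⊆ symmDiff A₀ (⇑T ⁻¹' A₀) ∪ E ∪ (⇑T ⁻¹' E) := by
      rw [hA, Set.preimage_diff]
      intro x hx
      rw [Set.mem_symmDiff] at hx
      simp only [Set.mem_union, Set.mem_symmDiff, Set.mem_diff, Set.mem_preimage] at *
      tauto
    calc μ (symmDiff A (⇑T ⁻¹' A)) ≤ μ (symmDiff A₀ (⇑T ⁻¹' A₀) ∪ E ∪ (⇑T ⁻¹' E)) :=
          measure_mono hincl
      _ ≤ μ (symmDiff A₀ (⇑T ⁻¹' A₀) ∪ E) + μ (⇑T ⁻¹' E) := measure_union_le _ _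
      _ ≤ (μ (symmDiff A₀ (⇑T ⁻¹' A₀)) + μ E) + μ (⇑T ⁻¹' E) := by
          gcongr
          exact measure_union_le _ _
      _ = (μ (symmDiff A₀ (⇑T ⁻¹' A₀)) + μ E) + μ E := by
          rw [hpreT hEm]
      _ ≤ (2 * μ B + μ B) + μ B :=
          add_le_add (add_le_add hsd0' hEle) hEle
      _ = 4 * μ B := by ring
  -- iterate
  have hsdm : MeasurableSet[m0] (symmDiff A (⇑T ⁻¹' A)) :=
    (hAm.diff (hT hAm)).union ((hT hAm).diff hAm)
  have hiter : ∀ k : ℕ, μ (symmDiff A ((⇑T)^[k] ⁻¹' A)) ≤ (k : ℝ≥0∞) * (4 * μ B) := by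
    intro k
    induction k with
    | zero => simp
    | succ k ih =>
      have htri : symmDiff A ((⇑T)^[k + 1] ⁻¹' A) ⊆
          symmDiff A ((⇑T)^[k] ⁻¹' A) ∪ symmDiff ((⇑T)^[k] ⁻¹' A) ((⇑T)^[k + 1] ⁻¹' A) :=
        symmDiff_triangle _ _ _
      have hstep : symmDiff ((⇑T)^[k] ⁻¹' A) ((⇑T)^[k + 1] ⁻¹' A) =
          (⇑T)^[k] ⁻¹' (symmDiff A (⇑T ⁻¹' A)) := by
        rw [Set.preimage_symmDiff, Function.iterate_succ', Set.preimage_comp]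
      have hstepμ : μ (symmDiff ((⇑T)^[k] ⁻¹' A) ((⇑T)^[k + 1] ⁻¹' A)) ≤ 4 * μ B := by
        rw [hstep, hpreIter k hsdm]
        exact hsd1
      calc μ (symmDiff A ((⇑T)^[k + 1] ⁻¹' A))
          ≤ μ (symmDiff A ((⇑T)^[k] ⁻¹' A)) +
            μ (symmDiff ((⇑T)^[k] ⁻¹' A) ((⇑T)^[k + 1] ⁻¹' A)) :=
            le_trans (measure_mono htri) (measure_union_le _ _)
        _ ≤ (k : ℝ≥0∞) * (4 * μ B) + 4 * μ B := add_le_add ih hstepμ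
        _ = ((k : ℝ≥0∞) + 1) * (4 * μ B) := by ring
        _ = ((k + 1 : ℕ) : ℝ≥0∞) * (4 * μ B) := by push_cast; ring
  -- the final numeric bound
  have hfinal : ∀ k : ℕ, k ≤ N → (k : ℝ≥0∞) * (4 * μ B) ≤ ENNReal.ofReal ε := by
    intro k hk
    have h1 : (k : ℝ≥0∞) * (4 * μ B) ≤ (N : ℝ≥0∞) * (4 * δ) := by
      have hkN : (k : ℝ≥0∞) ≤ (N : ℝ≥0∞) := by exact_mod_cast hk
      exact mul_le_mul' hkN (mul_le_mul' le_rfl hBle)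
    refine h1.trans ?_
    rw [hδ]
    rw [← ENNReal.ofReal_natCast N, show (4:ℝ≥0∞) = ENNReal.ofReal 4 by
      rw [ENNReal.ofReal_ofNat], ← ENNReal.ofReal_mul (by norm_num),
      ← ENNReal.ofReal_mul (by positivity)]
    refine ENNReal.ofReal_le_ofReal ?_
    have hN1 : (0:ℝ) < 4 * ((N:ℝ) + 1) := by positivity
    rw [div_eq_mul_inv]
    have hcast : ((N:ℝ) + 1) = ((N + 1 : ℕ) : ℝ) := by push_cast; ring
    calc (N:ℝ) * (4 * (ε * (4 * ((N:ℝ) + 1))⁻¹)) = ε * ((4 * (N:ℝ)) / (4 * ((N:ℝ) + 1))) := by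
          field_simp
      _ ≤ ε * 1 := by
          refine mul_le_mul_of_nonneg_left ?_ hε.le
          rw [div_le_one hN1]
          linarith
      _ = ε := mul_one ε
  -- conclude
  refine ⟨A, hAC, hAμ, ?_⟩
  have key : ∀ i j : ℕ, i ≤ j → j ≤ N →
      μ (symmDiff ((⇑T)^[i] ⁻¹' A) ((⇑T)^[j] ⁻¹' A)) ≤ ENNReal.ofReal ε := by
    intro i j hij hjN
    have hdecomp : (⇑T)^[j] ⁻¹' A = (⇑T)^[i] ⁻¹' ((⇑T)^[j - i] ⁻¹' A) := by
      have hji : j - i + i = j := by omega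
      rw [← Set.preimage_comp, ← Function.iterate_add, hji]
    rw [hdecomp, ← Set.preimage_symmDiff]
    have hsdm' : MeasurableSet[m0] (symmDiff A ((⇑T)^[j - i] ⁻¹' A)) :=
      (hAm.diff ((hT.iterate (j - i)) hAm)).union (((hT.iterate (j - i)) hAm).diff hAm)
    rw [hpreIter i hsdm']
    exact le_trans (hiter (j - i)) (hfinal (j - i) (by omega))
  intro i hi j hj
  rw [← Equiv.Perm.iterate_eq_pow T i, ← Equiv.Perm.iterate_eq_pow T j]
  rcases le_total i j with hij | hij
  · exact key i j hij hj
  · rw [symmDiff_comm]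
    exact key j i hij hi
end

section
/- Let (N_k)_{k≥1} be a nondecreasing sequence of positive integers with N_k → ∞, let 0 < λ < 1/2, set ρ_k = λ^k and a = 1 − Σ_{k≥1} λ^k ∈ (0,1), and let (ε_k)_{k≥1} be a strictly decreasing sequence of positive reals converging to zero. Then there exist sets (A_k)_{k≥1} ⊆ 𝒞 such that: (i) the A_k are pairwise disjoint; (ii) a·ρ_k ≤ μ(A_k) ≤ ρ_k for all k; and (iii) for all k ≥ 1 and all i, j ∈ {0, …, N_k}, μ(T^{-i}A_k Δ T^{-j}A_k) ≤ ε_k. -/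
set_option linter.unusedSectionVars false
set_option maxHeartbeats 1000000

open MeasureTheory Set Filter
open scoped Topology ENNReal

namespace QIDS

variable {Ω : Type*} [m0 : MeasurableSpace Ω] {μ : Measure Ω}
variable {S Sb : Ω → Ω}


variable {Ω : Type*} [m0 : MeasurableSpace Ω] {μ : Measure Ω}
variable {S Sb : Ω → Ω}

/-- first-hit level sets -/
def Dm (S : Ω → Ω) (B : Set Ω) (m : ℕ) : Set Ω :=
  (S^[m] ⁻¹' B) \ ⋃ (m' : ℕ) (_ : m' < m), S^[m'] ⁻¹' B

lemma mem_Dm {B : Set Ω} {m : ℕ} {x : Ω} :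
    x ∈ Dm S B m ↔ S^[m] x ∈ B ∧ ∀ m' < m, S^[m'] x ∉ B := by
  simp [Dm]

/-- base of an (exhaustive) tower of height `g` -/
def Mset (S : Ω → Ω) (B : Set Ω) (g : ℕ) : Set Ω := ⋃ q : ℕ, Dm S B ((q + 1) * g)

lemma Mset_gap {B : Set Ω} {g d : ℕ} {x : Ω} (hx : x ∈ Mset S B g)
    (hd : S^[d] x ∈ Mset S B g) (hd0 : 0 < d) (hdg : d < g) : False := by
  obtain ⟨q, hq⟩ := mem_iUnion.1 hx
  obtain ⟨q', hq'⟩ := mem_iUnion.1 hd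
  rw [mem_Dm] at hq hq'
  have h1 : S^[(q' + 1) * g + d] x ∈ B := by
    rw [Function.iterate_add_apply]; exact hq'.1
  have hgq : g ≤ (q + 1) * g := Nat.le_mul_of_pos_left _ (Nat.succ_pos q)
  rcases lt_trichotomy ((q + 1) * g) ((q' + 1) * g + d) with h | h | h
  · have hge : d ≤ (q + 1) * g := le_trans hdg.le hgq
    have h2 : S^[(q + 1) * g - d] (S^[d] x) ∈ B := by
      rw [← Function.iterate_add_apply, Nat.sub_add_cancel hge]; exact hq.1
    exact hq'.2 _ (by omega) h2
  · have hq'q : q' < q := by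
      by_contra hle
      push_neg at hle
      have : (q + 1) * g ≤ (q' + 1) * g := Nat.mul_le_mul_right _ (by omega)
      omega
    have h2 : (q' + 1 + 1) * g ≤ (q + 1) * g := Nat.mul_le_mul_right _ (by omega)
    have h3 : (q' + 1 + 1) * g = (q' + 1) * g + g := by ring
    have : g ≤ d := by linarith
    omega
  · exact hq.2 _ h h1

lemma Mset_cover {B : Set Ω} {g : ℕ} {x : Ω} (hg : 0 < g)
    (hit : ∃ m, S^[m] x ∈ B) (hno : ∀ m < g, S^[m] x ∉ B) :
    ∃ i < g, S^[i] x ∈ Mset S B g := by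
  classical
  have hm0 : S^[Nat.find hit] x ∈ B := Nat.find_spec hit
  set m₀ := Nat.find hit with hm₀def
  have hmin : ∀ t < m₀, S^[t] x ∉ B := fun t ht => Nat.find_min hit ht
  have hm0g : g ≤ m₀ := by
    by_contra h; push_neg at h; exact hno m₀ h hm0
  have h1 : 1 ≤ m₀ / g := (Nat.one_le_div_iff hg).2 hm0g
  have hdm : m₀ / g * g + m₀ % g = m₀ := Nat.div_add_mod' m₀ g
  refine ⟨m₀ % g, Nat.mod_lt _ hg, ?_⟩
  refine mem_iUnion.2 ⟨m₀ / g - 1, ?_⟩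
  rw [mem_Dm]
  have hq : (m₀ / g - 1 + 1) * g = m₀ / g * g := by
    congr 1; omega
  constructor
  · rw [← Function.iterate_add_apply, hq]
    have : m₀ / g * g + m₀ % g = m₀ := hdm
    rw [show m₀ / g * g + m₀ % g = m₀ from hdm]
    exact hm0
  · intro t ht hB
    rw [← Function.iterate_add_apply] at hB
    refine hmin (t + m₀ % g) ?_ hB
    rw [hq] at ht
    omega

lemma Mset_pre_sep {B : Set Ω} {g i i' : ℕ} {x : Ω} (hi : S^[i] x ∈ Mset S B g)
    (hi' : S^[i'] x ∈ Mset S B g) (hii' : i < i') (hg : i' < g) : False := by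
  have hd : S^[i' - i] (S^[i] x) ∈ Mset S B g := by
    rw [← Function.iterate_add_apply, Nat.sub_add_cancel hii'.le]; exact hi'
  exact Mset_gap hi hd (by omega) (by omega)



variable {Ω : Type*} [m0 : MeasurableSpace Ω] {μ : Measure Ω}
variable {S Sb : Ω → Ω}

lemma shift_SSb (hR : Function.RightInverse Sb S) (a b d : ℕ) (x : Ω) :
    S^[a + d] (Sb^[d + b] x) = S^[a] (Sb^[b] x) := by
  rw [Function.iterate_add_apply S a d, Function.iterate_add_apply Sb d b]
  congr 1
  exact (hR.iterate d) _

lemma cancel_SbS (hL : Function.LeftInverse Sb S) (n : ℕ) (x : Ω) :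
    Sb^[n] (S^[n] x) = x := (hL.iterate n) x

lemma cancel_SSb (hR : Function.RightInverse Sb S) (n : ℕ) (x : Ω) :
    S^[n] (Sb^[n] x) = x := (hR.iterate n) x

lemma hitting_full [IsProbabilityMeasure μ] (hS : Measurable S)
    (hmpS : MeasurePreserving S μ μ)
    (herg : ∀ A : Set Ω, MeasurableSet A → S ⁻¹' A = A → μ A = 0 ∨ μ A = 1)
    {B : Set Ω} (hB : MeasurableSet B) (hB0 : 0 < μ B) :
    μ (⋃ m : ℕ, S^[m] ⁻¹' B) = 1 := by
  set W : Set Ω := ⋃ m : ℕ, S^[m] ⁻¹' B with hWdef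
  have hWmeas : MeasurableSet W := MeasurableSet.iUnion fun m => (hS.iterate m) hB
  set Wn : ℕ → Set Ω := fun n => S^[n] ⁻¹' W with hWndef
  have hWnmeas : ∀ n, MeasurableSet (Wn n) := fun n => (hS.iterate n) hWmeas
  have hWnval : ∀ n, μ (Wn n) = μ W := fun n =>
    (hmpS.iterate n).measure_preimage hWmeas.nullMeasurableSet
  have hanti : Antitone Wn := by
    refine antitone_nat_of_succ_le fun n => ?_
    intro x hx
    simp only [hWndef, hWdef, mem_preimage, mem_iUnion] at hx ⊢
    obtain ⟨m, hm⟩ := hx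
    refine ⟨m + 1, ?_⟩
    rw [← Function.iterate_add_apply] at hm ⊢
    convert hm using 2
    omega
  have hpre : ∀ n, S ⁻¹' (Wn n) = Wn (n + 1) := by
    intro n
    ext x
    simp [hWndef, Function.iterate_succ_apply]
  set Y := ⋂ n, Wn n with hYdef
  have hYmeas : MeasurableSet Y := MeasurableSet.iInter hWnmeas
  have hinv : S ⁻¹' Y = Y := by
    have h1 : S ⁻¹' Y = ⋂ n, Wn (n + 1) := by
      rw [hYdef, preimage_iInter]
      exact iInter_congr hpre
    rw [h1]
    apply Subset.antisymm
    · exact fun x hx => mem_iInter.2 fun n => hanti (Nat.le_succ n) (mem_iInter.1 hx n)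
    · exact fun x hx => mem_iInter.2 fun n => mem_iInter.1 hx (n + 1)
  have hμY : μ Y = μ W := by
    have h2 := Directed.measure_iInter (fun n => (hWnmeas n).nullMeasurableSet)
      (hanti.directed_ge) ⟨0, measure_ne_top μ _⟩
    rw [hYdef, h2]
    simp [hWnval]
  rcases herg Y hYmeas hinv with h | h
  · exfalso
    have hBW : B ⊆ W := fun x hx => mem_iUnion.2 ⟨0, hx⟩
    have hW0 : μ W = 0 := by rw [← hμY, h]
    have : μ B = 0 := le_antisymm (hW0 ▸ measure_mono hBW) bot_le
    exact absurd this (ne_of_gt hB0)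
  · rw [← hμY, h]

lemma exists_small [IsProbabilityMeasure μ] {C : MeasurableSpace Ω} (hCle : C ≤ m0)
    (hCna : ∀ A : Set Ω, MeasurableSet[C] A → 0 < μ A →
      ∃ B : Set Ω, MeasurableSet[C] B ∧ B ⊆ A ∧ 0 < μ B ∧ μ B < μ A)
    (α : ℝ≥0∞) (hα : 0 < α) :
    ∃ B : Set Ω, MeasurableSet[C] B ∧ 0 < μ B ∧ μ B ≤ α := by
  have key : ∀ n : ℕ, ∃ B : Set Ω, MeasurableSet[C] B ∧ 0 < μ B ∧ μ B ≤ 2⁻¹ ^ n := by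
    intro n
    induction n with
    | zero =>
      exact ⟨univ, MeasurableSet.univ, by simp, by simp⟩
    | succ n ih =>
      obtain ⟨B, hBC, hB0, hBle⟩ := ih
      obtain ⟨B', hB'C, hB'sub, hB'0, hB'lt⟩ := hCna B hBC hB0
      have hdiff : μ (B \ B') = μ B - μ B' :=
        measure_diff hB'sub ((hCle _ hB'C).nullMeasurableSet) (measure_ne_top μ B')
      have hsum : μ B' + μ (B \ B') = μ B := by
        rw [hdiff]
        exact add_tsub_cancel_of_le hB'lt.le
      have hdpos : 0 < μ (B \ B') := by
        rw [hdiff]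
        exact tsub_pos_iff_lt.2 hB'lt
      have hhalf : ∀ X : Set Ω, 2 * μ X ≤ μ B → μ X ≤ 2⁻¹ ^ (n + 1) := by
        intro X hX
        have h1 : μ X ≤ μ B / 2 :=
          (ENNReal.le_div_iff_mul_le (Or.inl two_ne_zero) (Or.inl ENNReal.ofNat_ne_top)).2
            (by rw [mul_comm]; exact hX)
        have h2 : μ B / 2 ≤ 2⁻¹ ^ n / 2 := by gcongr
        have h3 : (2 : ℝ≥0∞)⁻¹ ^ n / 2 = 2⁻¹ ^ (n + 1) := by
          rw [pow_succ, div_eq_mul_inv]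
        exact h1.trans (h2.trans_eq h3)
      rcases le_total (μ B') (μ (B \ B')) with hc | hc
      · refine ⟨B', hB'C, hB'0, hhalf B' ?_⟩
        rw [two_mul]
        calc μ B' + μ B' ≤ μ B' + μ (B \ B') := by gcongr
        _ = μ B := hsum
      · refine ⟨B \ B', hBC.diff hB'C, hdpos, hhalf _ ?_⟩
        rw [two_mul]
        calc μ (B \ B') + μ (B \ B') ≤ μ B' + μ (B \ B') := by gcongr
        _ = μ B := hsum
  obtain ⟨n, hn⟩ := ENNReal.exists_inv_two_pow_lt (ne_of_gt hα)
  obtain ⟨B, h1, h2, h3⟩ := key n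
  exact ⟨B, h1, h2, le_trans h3 hn.le⟩



variable {Ω : Type*} [m0 : MeasurableSpace Ω] {μ : Measure Ω}
variable {S Sb : Ω → Ω}

lemma shift_SSb' (hR : Function.RightInverse Sb S) (a b d : ℕ) (x : Ω) :
    S^[a + d] (Sb^[d + b] x) = S^[a] (Sb^[b] x) := by
  rw [Function.iterate_add_apply S a d, Function.iterate_add_apply Sb d b]
  congr 1
  exact (hR.iterate d) _

lemma sep_card {g L : ℕ} (hg : 0 < g) (U : Finset ℕ) (hU : ∀ u ∈ U, u < L)
    (hsep : ∀ u ∈ U, ∀ u' ∈ U, u < u' → g ≤ u' - u) :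
    U.card ≤ (L - 1) / g + 1 := by
  have key : ∀ u ∈ U, ∀ u' ∈ U, u < u' → u / g < u' / g := by
    intro u hu u' hu' hlt
    have hs := hsep u hu u' hu' hlt
    have h2 : u + g ≤ u' := by omega
    calc u / g < u / g + 1 := Nat.lt_succ_self _
    _ = (u + g) / g := (Nat.add_div_right u hg).symm
    _ ≤ u' / g := Nat.div_le_div_right h2
  have hinj : Set.InjOn (· / g) U := by
    intro u hu u' hu' h
    by_contra hne
    rcases Nat.lt_or_ge u u' with hlt | hge
    · exact absurd h (Nat.ne_of_lt (key u hu u' hu' hlt))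
    · have hlt' : u' < u := by omega
      exact absurd h.symm (Nat.ne_of_lt (key u' hu' u hu hlt'))
  calc U.card = (U.image (· / g)).card := (Finset.card_image_of_injOn hinj).symm
  _ ≤ (Finset.range ((L - 1) / g + 1)).card := by
      apply Finset.card_le_card
      intro v hv
      obtain ⟨u, hu, rfl⟩ := Finset.mem_image.1 hv
      rw [Finset.mem_range]
      have : u ≤ L - 1 := by have := hU u hu; omega
      have := Nat.div_le_div_right (c := g) this
      omega
  _ = (L - 1) / g + 1 := Finset.card_range _

lemma meas_inter_swap {φ ρ : Ω → Ω} (hφmp : MeasurePreserving φ μ μ)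
    (hρ : Measurable ρ) (hinv : ∀ x, ρ (φ x) = x)
    {X Y : Set Ω} (hX : MeasurableSet X) (hY : MeasurableSet Y) :
    μ (X ∩ φ ⁻¹' Y) = μ (ρ ⁻¹' X ∩ Y) := by
  have h1 : φ ⁻¹' (ρ ⁻¹' X ∩ Y) = X ∩ φ ⁻¹' Y := by
    rw [preimage_inter]
    congr 1
    ext x
    simp [hinv x]
  rw [← h1]
  exact hφmp.measure_preimage ((hρ hX).inter hY).nullMeasurableSet

/-- counting bound: shifted copies of a `g`-separated set `X` meet `Y` with total
measure at most `((L-1)/g + 1) * μ Y`. -/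
lemma count_bound (hS : Measurable S) (hSb : Measurable Sb)
    {X Y : Set Ω} (hX : MeasurableSet X) (hY : MeasurableSet Y)
    {g : ℕ} (hg : 0 < g)
    (hgap : ∀ x ∈ X, ∀ d, 0 < d → d < g → S^[d] x ∉ X)
    (c L : ℕ) (hR : Function.RightInverse Sb S) :
    ∑ u ∈ Finset.range L, μ ((fun x => S^[c] (Sb^[u] x)) ⁻¹' X ∩ Y)
      ≤ (((L - 1) / g + 1 : ℕ) : ℝ≥0∞) * μ Y := by
  classical
  set ρ : ℕ → Ω → Ω := fun u x => S^[c] (Sb^[u] x) with hρdef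
  have hρmeas : ∀ u, Measurable (ρ u) := fun u => (hS.iterate c).comp (hSb.iterate u)
  have hmeas : ∀ u, MeasurableSet ((ρ u) ⁻¹' X ∩ Y) := fun u => ((hρmeas u) hX).inter hY
  have h1 : ∀ u, μ ((ρ u) ⁻¹' X ∩ Y) = ∫⁻ x, ((ρ u) ⁻¹' X ∩ Y).indicator 1 x ∂μ := by
    intro u
    rw [lintegral_indicator_one (hmeas u)]
  calc ∑ u ∈ Finset.range L, μ ((ρ u) ⁻¹' X ∩ Y)
      = ∑ u ∈ Finset.range L, ∫⁻ x, ((ρ u) ⁻¹' X ∩ Y).indicator 1 x ∂μ := by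
        exact Finset.sum_congr rfl fun u _ => h1 u
  _ = ∫⁻ x, ∑ u ∈ Finset.range L, ((ρ u) ⁻¹' X ∩ Y).indicator 1 x ∂μ := by
        rw [lintegral_finset_sum]
        intro u _
        exact (measurable_one).indicator (hmeas u)
  _ ≤ ∫⁻ x, (((L - 1) / g + 1 : ℕ) : ℝ≥0∞) * Y.indicator 1 x ∂μ := by
        apply lintegral_mono
        intro x
        by_cases hxY : x ∈ Y
        · have hterm : ∀ u, ((ρ u) ⁻¹' X ∩ Y).indicator (1 : Ω → ℝ≥0∞) x
              = if ρ u x ∈ X then 1 else 0 := by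
            intro u
            by_cases h : ρ u x ∈ X <;> simp [h, hxY]
          have heq : ∑ u ∈ Finset.range L, ((ρ u) ⁻¹' X ∩ Y).indicator (1 : Ω → ℝ≥0∞) x
              = (((Finset.range L).filter (fun u => ρ u x ∈ X)).card : ℝ≥0∞) := by
            simp only [hterm]
            rw [Finset.sum_boole]
          have hcard : ((Finset.range L).filter (fun u => ρ u x ∈ X)).card ≤ (L - 1) / g + 1 := by
            apply sep_card hg
            · intro u hu
              exact Finset.mem_range.1 (Finset.mem_filter.1 hu).1
            · intro u hu u' hu' hlt
              have hu2 := (Finset.mem_filter.1 hu).2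
              have hu'2 := (Finset.mem_filter.1 hu').2
              by_contra hcon
              push_neg at hcon
              have h3 : u' - u + u = u' := Nat.sub_add_cancel hlt.le
              have hid : S^[u' - u] (ρ u' x) = ρ u x := by
                calc S^[u' - u] (S^[c] (Sb^[u'] x))
                    = S^[(u' - u) + c] (Sb^[u'] x) :=
                      (Function.iterate_add_apply S _ c _).symm
                _ = S^[c + (u' - u)] (Sb^[(u' - u) + u] x) := by rw [Nat.add_comm, h3]
                _ = S^[c] (Sb^[u] x) := shift_SSb' hR c u (u' - u) x
              exact (hgap _ hu'2 (u' - u) (by omega) (by omega)) (hid ▸ hu2)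
          simp only []
          rw [heq, indicator_of_mem hxY]
          simp only [Pi.one_apply, mul_one]
          exact_mod_cast hcard
        · have hz : ∀ u, ((ρ u) ⁻¹' X ∩ Y).indicator (1 : Ω → ℝ≥0∞) x = 0 := by
            intro u
            apply indicator_of_notMem
            simp [hxY]
          simp only []
          simp [hz, indicator_of_notMem hxY]
  _ = (((L - 1) / g + 1 : ℕ) : ℝ≥0∞) * μ Y := by
        rw [lintegral_const_mul _ ((measurable_one).indicator hY),
          lintegral_indicator_one hY]

lemma preC_iterate {C : MeasurableSpace Ω}
    (hpre : ∀ A : Set Ω, MeasurableSet[C] A → MeasurableSet[C] (S ⁻¹' A)) :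
    ∀ (n : ℕ) (A : Set Ω), MeasurableSet[C] A → MeasurableSet[C] (S^[n] ⁻¹' A) := by
  intro n
  induction n with
  | zero => intro A hA; simpa using hA
  | succ n ih =>
    intro A hA
    have h1 : S^[n + 1] ⁻¹' A = S ⁻¹' (S^[n] ⁻¹' A) := by
      rw [Function.iterate_succ]
      rfl
    rw [h1]
    exact hpre _ (ih A hA)

lemma Dm_measC {C : MeasurableSpace Ω}
    (hpre : ∀ A : Set Ω, MeasurableSet[C] A → MeasurableSet[C] (S ⁻¹' A))
    {B : Set Ω} (hB : MeasurableSet[C] B) (m : ℕ) : MeasurableSet[C] (Dm S B m) :=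
  (preC_iterate hpre m B hB).diff
    (MeasurableSet.iUnion fun m' => MeasurableSet.iUnion fun _ => preC_iterate hpre m' B hB)

lemma Mset_measC {C : MeasurableSpace Ω}
    (hpre : ∀ A : Set Ω, MeasurableSet[C] A → MeasurableSet[C] (S ⁻¹' A))
    {B : Set Ω} (hB : MeasurableSet[C] B) (g : ℕ) : MeasurableSet[C] (Mset S B g) :=
  MeasurableSet.iUnion fun q => Dm_measC hpre hB ((q + 1) * g)

-- copies of part1 lemmas needed here (merged later)



lemma Mset_tower_measure [IsProbabilityMeasure μ] (hS : Measurable S)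
    (hmpS : MeasurePreserving S μ μ) {B : Set Ω} (hB : MeasurableSet B) {g : ℕ} :
    μ (⋃ i ∈ Finset.range g, S^[i] ⁻¹' Mset S B g) = (g : ℝ≥0∞) * μ (Mset S B g) := by
  have hM : MeasurableSet (Mset S B g) :=
    Mset_measC (fun A hA => hS hA) hB g
  have hdisj : (↑(Finset.range g) : Set ℕ).PairwiseDisjoint
      (fun i => S^[i] ⁻¹' Mset S B g) := by
    intro i hi j hj hij
    simp only [Finset.coe_range, mem_Iio] at hi hj
    rcases Nat.lt_or_ge i j with h | h
    · refine Set.disjoint_left.2 fun x hxi hxj => ?_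
      exact Mset_pre_sep hxi hxj h hj
    · have hji : j < i := by omega
      refine Set.disjoint_left.2 fun x hxi hxj => ?_
      exact Mset_pre_sep hxj hxi hji hi
  rw [measure_biUnion_finset hdisj (fun i _ => (hS.iterate i) hM)]
  have hval : ∀ i, μ (S^[i] ⁻¹' Mset S B g) = μ (Mset S B g) := fun i =>
    (hmpS.iterate i).measure_preimage hM.nullMeasurableSet
  rw [Finset.sum_congr rfl fun i _ => hval i, Finset.sum_const, Finset.card_range,
    nsmul_eq_mul]

lemma Mset_tower_le_one [IsProbabilityMeasure μ] (hS : Measurable S)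
    (hmpS : MeasurePreserving S μ μ) {B : Set Ω} (hB : MeasurableSet B) {g : ℕ} :
    (g : ℝ≥0∞) * μ (Mset S B g) ≤ 1 := by
  rw [← Mset_tower_measure hS hmpS hB]
  exact prob_le_one

lemma Mset_tower_ge [IsProbabilityMeasure μ] (hS : Measurable S)
    (hmpS : MeasurePreserving S μ μ) {B : Set Ω} (hB : MeasurableSet B) {g : ℕ}
    (hg : 0 < g) (hW : μ (⋃ m : ℕ, S^[m] ⁻¹' B) = 1) :
    1 ≤ (g : ℝ≥0∞) * μ (Mset S B g) + (g : ℝ≥0∞) * μ B := by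
  classical
  have hsub : (⋃ m : ℕ, S^[m] ⁻¹' B) ⊆
      (⋃ i ∈ Finset.range g, S^[i] ⁻¹' Mset S B g) ∪ (⋃ m ∈ Finset.range g, S^[m] ⁻¹' B) := by
    intro x hx
    by_cases hcase : ∃ m < g, S^[m] x ∈ B
    · obtain ⟨m, hm, hmB⟩ := hcase
      exact Or.inr (mem_biUnion (Finset.mem_range.2 hm) hmB)
    · push_neg at hcase
      obtain ⟨m, hm⟩ := mem_iUnion.1 hx
      obtain ⟨i, hi, hiM⟩ := Mset_cover hg ⟨m, hm⟩ hcase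
      exact Or.inl (mem_biUnion (Finset.mem_range.2 hi) hiM)
  calc (1 : ℝ≥0∞) = μ (⋃ m : ℕ, S^[m] ⁻¹' B) := hW.symm
  _ ≤ μ ((⋃ i ∈ Finset.range g, S^[i] ⁻¹' Mset S B g) ∪ (⋃ m ∈ Finset.range g, S^[m] ⁻¹' B)) :=
      measure_mono hsub
  _ ≤ μ (⋃ i ∈ Finset.range g, S^[i] ⁻¹' Mset S B g)
      + μ (⋃ m ∈ Finset.range g, S^[m] ⁻¹' B) := measure_union_le _ _
  _ ≤ (g : ℝ≥0∞) * μ (Mset S B g) + (g : ℝ≥0∞) * μ B := by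
      gcongr
      · rw [Mset_tower_measure hS hmpS hB]
      · calc μ (⋃ m ∈ Finset.range g, S^[m] ⁻¹' B)
            ≤ ∑ m ∈ Finset.range g, μ (S^[m] ⁻¹' B) := measure_biUnion_finset_le _ _
        _ = ∑ m ∈ Finset.range g, μ B := Finset.sum_congr rfl fun m _ =>
              (hmpS.iterate m).measure_preimage hB.nullMeasurableSet
        _ = (g : ℝ≥0∞) * μ B := by rw [Finset.sum_const, Finset.card_range, nsmul_eq_mul]



noncomputable def nuq (lam a : ℝ) (k : ℕ) : ℝ := (1 + a) / 2 * lam ^ (k + 1)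

noncomputable def marq (lam a : ℝ) (k : ℕ) : ℝ := (1 - a) / 2 * lam ^ (k + 1)

noncomputable def gseq (lam a : ℝ) (N : ℕ → ℕ) (ε : ℕ → ℝ) : ℕ → ℕ
  | 0 => max (max ⌈4 * (N 0 : ℝ) / ε 0⌉₊ ⌈32 / marq lam a 0⌉₊) 2
  | (k + 1) =>
      max (max (max ⌈4 * (N (k + 1) : ℝ) / ε (k + 1)⌉₊ ⌈32 / marq lam a (k + 1)⌉₊)
        (2 * gseq lam a N ε k))
        ⌈48 * ((⌈nuq lam a k * (gseq lam a N ε k : ℝ)⌉₊ : ℕ) : ℝ) / marq lam a k⌉₊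

noncomputable def lseq (lam a : ℝ) (N : ℕ → ℕ) (ε : ℕ → ℝ) (k : ℕ) : ℕ :=
  ⌈nuq lam a k * (gseq lam a N ε k : ℝ)⌉₊

variable {lam a : ℝ} {N : ℕ → ℕ} {ε : ℕ → ℝ}

lemma gseq_ge_two (k : ℕ) : 2 ≤ gseq lam a N ε k := by
  cases k with
  | zero => exact le_max_of_le_right le_rfl
  | succ k =>
    have h : 2 ≤ 2 * gseq lam a N ε k ∨ 1 ≤ gseq lam a N ε k ∨ True := Or.inr (Or.inr trivial)
    have ih : 2 ≤ gseq lam a N ε k := gseq_ge_two k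
    calc 2 ≤ 2 * gseq lam a N ε k := by omega
    _ ≤ _ := le_max_of_le_left (le_max_right _ _)

lemma gseq_pos (k : ℕ) : 0 < gseq lam a N ε k := lt_of_lt_of_le (by norm_num) (gseq_ge_two k)

lemma gseq_cast_pos (k : ℕ) : (0 : ℝ) < (gseq lam a N ε k : ℝ) := by
  exact_mod_cast gseq_pos k

lemma gseq_geN (k : ℕ) : 4 * (N k : ℝ) / ε k ≤ (gseq lam a N ε k : ℝ) := by
  have h1 : (⌈4 * (N k : ℝ) / ε k⌉₊ : ℕ) ≤ gseq lam a N ε k := by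
    cases k with
    | zero => exact le_max_of_le_left (le_max_left _ _)
    | succ k => exact le_max_of_le_left (le_max_of_le_left (le_max_left _ _))
  calc 4 * (N k : ℝ) / ε k ≤ (⌈4 * (N k : ℝ) / ε k⌉₊ : ℝ) := Nat.le_ceil _
  _ ≤ _ := by exact_mod_cast h1

lemma gseq_geM (k : ℕ) : 32 / marq lam a k ≤ (gseq lam a N ε k : ℝ) := by
  have h1 : (⌈32 / marq lam a k⌉₊ : ℕ) ≤ gseq lam a N ε k := by
    cases k with
    | zero => exact le_max_of_le_left (le_max_right _ _)
    | succ k => exact le_max_of_le_left (le_max_of_le_left (le_max_right _ _))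
  calc 32 / marq lam a k ≤ (⌈32 / marq lam a k⌉₊ : ℝ) := Nat.le_ceil _
  _ ≤ _ := by exact_mod_cast h1

lemma gseq_succ_ge (k : ℕ) : 2 * gseq lam a N ε k ≤ gseq lam a N ε (k + 1) :=
  le_max_of_le_left (le_max_right _ _)

lemma gseq_geL (k : ℕ) :
    48 * ((lseq lam a N ε k : ℕ) : ℝ) / marq lam a k ≤ (gseq lam a N ε (k + 1) : ℝ) := by
  have h1 : (⌈48 * ((lseq lam a N ε k : ℕ) : ℝ) / marq lam a k⌉₊ : ℕ)
      ≤ gseq lam a N ε (k + 1) := le_max_right _ _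
  calc 48 * ((lseq lam a N ε k : ℕ) : ℝ) / marq lam a k
      ≤ (⌈48 * ((lseq lam a N ε k : ℕ) : ℝ) / marq lam a k⌉₊ : ℝ) := Nat.le_ceil _
  _ ≤ _ := by exact_mod_cast h1

lemma gseq_growth (k i : ℕ) : 2 ^ i * gseq lam a N ε (k + 1) ≤ gseq lam a N ε (k + 1 + i) := by
  induction i with
  | zero => simp
  | succ i ih =>
    have h1 : 2 * gseq lam a N ε (k + 1 + i) ≤ gseq lam a N ε (k + 1 + (i + 1)) :=
      gseq_succ_ge (k + 1 + i)
    calc 2 ^ (i + 1) * gseq lam a N ε (k + 1) = 2 * (2 ^ i * gseq lam a N ε (k + 1)) := by ring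
    _ ≤ 2 * gseq lam a N ε (k + 1 + i) := by omega
    _ ≤ _ := h1


end QIDS

open MeasureTheory Filter QIDS Set
open scoped Topology ENNReal

/-- Lemma 2: In an ergodic dynamical system with a `T`-invariant
sub-σ-algebra `𝒞` on which `μ` is non-atomic, given `N_k ↗ ∞`, `0 < λ < 1/2`,
`ρ_k = λ^k`, `a = 1 - ∑_{k≥1} λ^k`, and `ε_k ↘ 0` strictly decreasing positive, there
are sets `A_k ∈ 𝒞` (indexed here by `k : ℕ`, where index `k` stands for the paper's
`k+1 ≥ 1`) which are pairwise disjoint, satisfy `a·ρ_k ≤ μ(A_k) ≤ ρ_k`, and satisfy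
`μ(T^{-i}A_k Δ T^{-j}A_k) ≤ ε_k` for all `0 ≤ i, j ≤ N_k`. -/
theorem exists_quasi_invariant_disjoint_sets
    {Ω : Type*} [m0 : MeasurableSpace Ω] (μ : Measure Ω) [IsProbabilityMeasure μ]
    (T : Equiv.Perm Ω) (hT : Measurable T) (hTinv : Measurable T.symm)
    (hTmp : MeasurePreserving T μ μ)
    (herg : ∀ A : Set Ω, MeasurableSet A → ⇑T ⁻¹' A = A → μ A = 0 ∨ μ A = 1)
    (C : MeasurableSpace Ω) (hCle : C ≤ m0)
    (hCT : MeasurableSpace.comap T C = C)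
    (hCna : ∀ A : Set Ω, MeasurableSet[C] A → 0 < μ A →
      ∃ B : Set Ω, MeasurableSet[C] B ∧ B ⊆ A ∧ 0 < μ B ∧ μ B < μ A)
    (N : ℕ → ℕ) (hNpos : ∀ k, 0 < N k) (hNmono : Monotone N)
    (hNtop : Tendsto N atTop atTop)
    (lam : ℝ) (hlam0 : 0 < lam) (hlam1 : lam < 1 / 2)
    (a : ℝ) (ha : a = 1 - ∑' k : ℕ, lam ^ (k + 1))
    (ε : ℕ → ℝ) (hεpos : ∀ k, 0 < ε k) (hεanti : StrictAnti ε)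
    (hεlim : Tendsto ε atTop (𝓝 0)) :
    ∃ A : ℕ → Set Ω,
      (∀ k, MeasurableSet[C] (A k)) ∧
      Pairwise (Function.onFun Disjoint A) ∧
      (∀ k, ENNReal.ofReal (a * lam ^ (k + 1)) ≤ μ (A k) ∧
        μ (A k) ≤ ENNReal.ofReal (lam ^ (k + 1))) ∧
      (∀ k, ∀ i ≤ N k, ∀ j ≤ N k,
        μ (symmDiff (⇑(T ^ i) ⁻¹' A k) (⇑(T ^ j) ⁻¹' A k)) ≤ ENNReal.ofReal (ε k)) := by
  classical
  letI : MeasurableSpace Ω := m0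
  -- ## basic real facts
  have hlam1' : lam < 1 := by linarith
  have hlamne : (0:ℝ) < 1 - lam := by linarith
  have hgeom : ∑' k : ℕ, lam ^ (k + 1) = lam / (1 - lam) := by
    have h1 : ∀ k : ℕ, lam ^ (k + 1) = lam * lam ^ k := fun k => by ring
    calc ∑' k : ℕ, lam ^ (k + 1) = ∑' k : ℕ, lam * lam ^ k := by
          exact tsum_congr fun k => h1 k
    _ = lam * ∑' k : ℕ, lam ^ k := tsum_mul_left
    _ = lam * (1 - lam)⁻¹ := by rw [tsum_geometric_of_lt_one hlam0.le hlam1']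
    _ = lam / (1 - lam) := by rw [div_eq_mul_inv]
  have h1a : 1 - a = lam / (1 - lam) := by rw [ha, hgeom]; ring
  have ha1 : a < 1 := by
    have h2 : 0 < lam / (1 - lam) := div_pos hlam0 hlamne
    linarith
  have ha0 : 0 < a := by
    have h2 : lam / (1 - lam) < 1 := (div_lt_one hlamne).2 (by linarith)
    linarith
  have hcube : (1 + a) ^ 2 * lam ≤ 1 := by
    have h2 : 1 + a = (2 - 3 * lam) / (1 - lam) := by
      have : a = 1 - lam / (1 - lam) := by linarith
      rw [this]
      field_simp
      ring
    have key : lam * (2 - 3 * lam) ^ 2 ≤ (1 - lam) ^ 2 := by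
      nlinarith [mul_nonneg (by linarith : (0:ℝ) ≤ 1/2 - lam) (sq_nonneg (lam - 1/3)),
        sq_nonneg (lam - 2/5), hlam0.le]
    calc (1 + a) ^ 2 * lam = lam * (2 - 3 * lam) ^ 2 / (1 - lam) ^ 2 := by
          rw [h2, div_pow]; ring
    _ ≤ (1 - lam) ^ 2 / (1 - lam) ^ 2 := by
          gcongr
    _ = 1 := div_self (by positivity)
  -- ## dynamics setup
  set S : Ω → Ω := ⇑T with hSdef
  set Sb : Ω → Ω := ⇑T.symm with hSbdef
  have hLinv : Function.LeftInverse Sb S := fun x => T.symm_apply_apply x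
  have hRinv : Function.RightInverse Sb S := fun x => T.apply_symm_apply x
  have hmpS : MeasurePreserving S μ μ := hTmp
  have hmpSb : MeasurePreserving Sb μ μ := by
    refine ⟨hTinv, ?_⟩
    have h1 : Measure.map Sb (Measure.map S μ) = μ := by
      rw [Measure.map_map hTinv hT]
      have h2 : Sb ∘ S = id := funext hLinv
      rw [h2, Measure.map_id]
    rw [hmpS.map_eq] at h1
    exact h1
  have hmS : Measurable S := hT
  have hmSb : Measurable Sb := hTinv
  have hpreC : ∀ A : Set Ω, MeasurableSet[C] A → MeasurableSet[C] (S ⁻¹' A) := by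
    intro A hA
    have h1 : MeasurableSet[MeasurableSpace.comap S C] (S ⁻¹' A) :=
      MeasurableSpace.measurableSet_comap.2 ⟨A, hA, rfl⟩
    rwa [hCT] at h1
  have hpreCb : ∀ A : Set Ω, MeasurableSet[C] A → MeasurableSet[C] (Sb ⁻¹' A) := by
    intro A hA
    rw [← hCT] at hA
    obtain ⟨A', hA', hpre⟩ := MeasurableSpace.measurableSet_comap.1 hA
    have h1 : Sb ⁻¹' A = A' := by
      rw [← hpre]
      ext x
      simp only [mem_preimage]
      rw [show S (Sb x) = x from hRinv x]
    rwa [h1]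
  -- ## parameters
  set g : ℕ → ℕ := gseq lam a N ε with hg
  set l : ℕ → ℕ := lseq lam a N ε with hl
  set nu : ℕ → ℝ := nuq lam a with hnu
  set mar : ℕ → ℝ := marq lam a with hmar
  have hmarpos : ∀ k, 0 < mar k := by
    intro k
    rw [hmar]
    unfold marq
    have : (0:ℝ) < lam ^ (k+1) := pow_pos hlam0 _
    nlinarith
  have hnupos : ∀ k, 0 < nu k := by
    intro k
    rw [hnu]; unfold nuq
    have : (0:ℝ) < lam ^ (k+1) := pow_pos hlam0 _
    nlinarith
  have hnule1 : ∀ k, nu k ≤ 1 := by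
    intro k
    rw [hnu]; unfold nuq
    have h1 : lam ^ (k+1) ≤ 1 := pow_le_one₀ hlam0.le hlam1'.le
    have h2 : (0:ℝ) < lam ^ (k+1) := pow_pos hlam0 _
    nlinarith
  have hgpos : ∀ k, (0:ℝ) < (g k : ℝ) := fun k => gseq_cast_pos k
  have hg2 : ∀ k, 2 ≤ g k := fun k => gseq_ge_two k
  have hl_ge : ∀ k, nu k * (g k : ℝ) ≤ (l k : ℝ) := fun k => Nat.le_ceil _
  have hl_le : ∀ k, (l k : ℝ) ≤ nu k * (g k : ℝ) + 1 := by
    intro k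
    have := Nat.ceil_lt_add_one (mul_nonneg (hnupos k).le (hgpos k).le)
    rw [hl]; unfold lseq
    rw [hnu] at this ⊢
    exact this.le
  have hl_le_g : ∀ k, l k ≤ g k := by
    intro k
    rw [hl]; unfold lseq
    rw [← hg]
    refine Nat.ceil_le.2 ?_
    calc nuq lam a k * (g k : ℝ) ≤ 1 * (g k : ℝ) := by
          have := hnule1 k; rw [hnu] at this
          exact mul_le_mul_of_nonneg_right this (hgpos k).le
    _ = (g k : ℝ) := one_mul _
  have hl_pos : ∀ k, 0 < l k := by
    intro k
    rw [hl]; unfold lseq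
    refine Nat.ceil_pos.2 ?_
    have := hnupos k; rw [hnu] at this
    exact mul_pos this (hgpos k)
  have hinvg : ∀ k, 1 / (g k : ℝ) ≤ mar k / 32 := by
    intro k
    have h1 : 32 / mar k ≤ (g k : ℝ) := gseq_geM k
    rw [div_le_iff₀ (hmarpos k)] at h1
    rw [div_le_div_iff₀ (hgpos k) (by norm_num : (0:ℝ) < 32)]
    linarith
  -- ## small base sets and towers
  have hBex : ∀ k, ∃ Bs : Set Ω, MeasurableSet[C] Bs ∧ 0 < μ Bs ∧
      μ Bs ≤ ENNReal.ofReal (1 / (g k : ℝ) ^ 2) := by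
    intro k
    exact exists_small hCle hCna _
      (ENNReal.ofReal_pos.2 (div_pos one_pos (pow_pos (hgpos k) 2)))
  choose B hBC hB0 hBle using hBex
  set M : ℕ → Set Ω := fun k => Mset S (B k) (g k) with hM
  have hMC : ∀ k, MeasurableSet[C] (M k) := fun k => Mset_measC hpreC (hBC k) (g k)
  have hMm : ∀ k, MeasurableSet (M k) := fun k => hCle _ (hMC k)
  have hMgap : ∀ k, ∀ x ∈ M k, ∀ d, 0 < d → d < g k → S^[d] x ∉ M k := by
    intro k x hx d hd0 hdg hcon
    exact Mset_gap hx hcon hd0 hdg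
  have hWfull : ∀ k, μ (⋃ mm : ℕ, S^[mm] ⁻¹' (B k)) = 1 := fun k =>
    hitting_full hmS hmpS herg (hCle _ (hBC k)) (hB0 k)
  have hMle : ∀ k, (g k : ℝ≥0∞) * μ (M k) ≤ 1 := fun k =>
    Mset_tower_le_one hmS hmpS (hCle _ (hBC k))
  have hMge : ∀ k, 1 ≤ (g k : ℝ≥0∞) * μ (M k) + (g k : ℝ≥0∞) * μ (B k) := fun k =>
    Mset_tower_ge hmS hmpS (hCle _ (hBC k)) (gseq_pos k) (hWfull k)
  set m : ℕ → ℝ := fun k => (μ (M k)).toReal with hmdef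
  have hm_nonneg : ∀ k, 0 ≤ m k := fun k => ENNReal.toReal_nonneg
  have hm_le : ∀ k, m k ≤ 1 / (g k : ℝ) := by
    intro k
    have h1 := ENNReal.toReal_mono (by simp) (hMle k)
    rw [ENNReal.toReal_mul, ENNReal.toReal_natCast, ENNReal.toReal_one] at h1
    rw [le_div_iff₀ (hgpos k)]
    linarith
  have hm_ge : ∀ k, 1 / (g k : ℝ) - 1 / (g k : ℝ) ^ 2 ≤ m k := by
    intro k
    have h1 := ENNReal.toReal_mono ?_ (hMge k)
    rotate_left
    · exact ENNReal.add_ne_top.2 ⟨ENNReal.mul_ne_top (by simp) (measure_ne_top μ _),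
        ENNReal.mul_ne_top (by simp) (measure_ne_top μ _)⟩
    rw [ENNReal.toReal_add (ENNReal.mul_ne_top (by simp) (measure_ne_top μ _))
        (ENNReal.mul_ne_top (by simp) (measure_ne_top μ _)),
      ENNReal.toReal_mul, ENNReal.toReal_mul, ENNReal.toReal_natCast,
      ENNReal.toReal_one] at h1
    have hb : (μ (B k)).toReal ≤ 1 / (g k : ℝ) ^ 2 := by
      have h2 := ENNReal.toReal_mono (by simp) (hBle k)
      rwa [ENNReal.toReal_ofReal (by positivity)] at h2
    have h3 : (g k : ℝ) * (μ (B k)).toReal ≤ (g k : ℝ) * (1 / (g k : ℝ) ^ 2) :=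
      mul_le_mul_of_nonneg_left hb (hgpos k).le
    have h4 : (g k : ℝ) * (1 / (g k : ℝ) ^ 2) = 1 / (g k : ℝ) := by
      have hne : (g k : ℝ) ≠ 0 := ne_of_gt (hgpos k)
      field_simp
    have h5 : 1 - 1 / (g k : ℝ) ≤ (g k : ℝ) * m k := by
      rw [hmdef]
      simp only []
      linarith
    rw [sub_le_iff_le_add, div_le_iff₀ (hgpos k)] at *
    nlinarith [hgpos k, sq_nonneg (1 / (g k:ℝ))]
  -- ## the sets
  set L : ℕ → ℕ → ℕ := fun k j => l k + l j - 1 with hLdef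
  set Zw : ℕ → ℕ → Set Ω := fun k j =>
    Sb^[l k - 1] ⁻¹' (⋃ u ∈ Finset.range (L k j), S^[u] ⁻¹' (M j)) with hZdef
  set H : ℕ → Set Ω := fun k => M k \ ⋃ i : ℕ, Zw k (k + 1 + i) with hHdef
  set A : ℕ → Set Ω := fun k => ⋃ i ∈ Finset.range (l k), S^[i] ⁻¹' (H k) with hAdef
  have hZmem : ∀ k j x, x ∈ Zw k j ↔ ∃ u < L k j, S^[u] (Sb^[l k - 1] x) ∈ M j := by
    intro k j x
    simp [hZdef]
  have hHsubM : ∀ k, H k ⊆ M k := fun k => diff_subset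
  have hZC : ∀ k j, MeasurableSet[C] (Zw k j) := by
    intro k j
    exact preC_iterate hpreCb (l k - 1) _
      (MeasurableSet.biUnion (Finset.countable_toSet _)
        (fun u _ => preC_iterate hpreC u _ (hMC j)))
  have hHC : ∀ k, MeasurableSet[C] (H k) := fun k =>
    (hMC k).diff (MeasurableSet.iUnion fun i => hZC k (k + 1 + i))
  have hHm : ∀ k, MeasurableSet (H k) := fun k => hCle _ (hHC k)
  have hAC : ∀ k, MeasurableSet[C] (A k) := fun k =>
    MeasurableSet.biUnion (Finset.countable_toSet _)
      (fun i _ => preC_iterate hpreC i _ (hHC k))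
  have hAm : ∀ k, MeasurableSet (A k) := fun k => hCle _ (hAC k)
  -- ## pairwise disjointness
  have hdisj : ∀ k m', k < m' → Disjoint (A k) (A m') := by
    intro k m' hkm
    rw [Set.disjoint_left]
    intro x hxk hxm
    simp only [hAdef, mem_iUnion, Finset.mem_range, exists_prop] at hxk hxm
    obtain ⟨i, hi, hxi⟩ := hxk
    obtain ⟨i', hi', hxi'⟩ := hxm
    rw [mem_preimage] at hxi hxi'
    have hyM : S^[i'] x ∈ M m' := hHsubM m' hxi'
    rw [hHdef] at hxi
    simp only [mem_diff, mem_iUnion, not_exists] at hxi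
    refine hxi.2 (m' - k - 1) ?_
    have hm'eq : k + 1 + (m' - k - 1) = m' := by omega
    rw [hm'eq, hZmem]
    have hile : i ≤ l k - 1 := by omega
    have hLval : L k m' = l k + l m' - 1 := rfl
    have h1k := hl_pos k
    have h1m := hl_pos m'
    refine ⟨i' + (l k - 1 - i), by omega, ?_⟩
    have hID : S^[i' + (l k - 1 - i)] (Sb^[l k - 1] (S^[i] x)) = S^[i'] x := by
      have h1 : Sb^[l k - 1] (S^[i] x) = Sb^[l k - 1 - i] x := by
        have h2 : l k - 1 = (l k - 1 - i) + i := by omega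
        conv_lhs => rw [h2]
        rw [Function.iterate_add_apply Sb (l k - 1 - i) i]
        congr 1
        exact cancel_SbS hLinv i x
      rw [h1]
      have h3 := shift_SSb hRinv i' 0 (l k - 1 - i) x
      simpa using h3
    rw [hID]
    exact hyM
  -- ## measure of A k
  have hApre_disj : ∀ k, (↑(Finset.range (l k)) : Set ℕ).PairwiseDisjoint
      (fun i => S^[i] ⁻¹' (H k)) := by
    intro k i hi j hj hij
    simp only [Finset.coe_range, mem_Iio] at hi hj
    have key : ∀ i1 i2, i1 < i2 → i2 < l k → Disjoint (S^[i1] ⁻¹' (H k)) (S^[i2] ⁻¹' (H k)) := by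
      intro i1 i2 h12 h2l
      rw [Set.disjoint_left]
      intro x hx1 hx2
      rw [mem_preimage] at hx1 hx2
      exact Mset_pre_sep (hHsubM k hx1) (hHsubM k hx2) h12 (lt_of_lt_of_le h2l (hl_le_g k))
    rcases Nat.lt_or_ge i j with h | h
    · exact key i j h hj
    · exact (key j i (by omega) hi).symm
  have hAval : ∀ k, μ (A k) = (l k : ℝ≥0∞) * μ (H k) := by
    intro k
    rw [hAdef]
    simp only []
    rw [measure_biUnion_finset (hApre_disj k) (fun i _ => (hmS.iterate i) (hHm k))]
    rw [Finset.sum_congr rfl (fun i _ => (hmpS.iterate i).measure_preimage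
      (hHm k).nullMeasurableSet), Finset.sum_const, Finset.card_range, nsmul_eq_mul]
  -- ## loss bounds
  have hloss : ∀ k i, μ (M k ∩ Zw k (k + 1 + i)) ≤
      ENNReal.ofReal (3 / (g (k + 1 + i) : ℝ) + nu (k + 1 + i) / (g k : ℝ)) := by
    intro k i
    set j := k + 1 + i with hj
    set c := l k - 1 with hc
    set K : ℕ := (L k j - 1) / g k + 1 with hK
    have hrw : M k ∩ Zw k j = ⋃ u ∈ Finset.range (L k j),
        (M k ∩ ((fun x => S^[u] (Sb^[c] x)) ⁻¹' (M j))) := by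
      ext x
      constructor
      · rintro ⟨hxM, hxZ⟩
        obtain ⟨u, hu, hx⟩ := (hZmem k j x).1 hxZ
        exact mem_biUnion (Finset.mem_range.2 hu) ⟨hxM, hx⟩
      · intro hx
        simp only [mem_iUnion, Finset.mem_range, exists_prop] at hx
        obtain ⟨u, hu, hxM, hxu⟩ := hx
        exact ⟨hxM, (hZmem k j x).2 ⟨u, hu, hxu⟩⟩
    have hmain : μ (M k ∩ Zw k j) ≤ (K : ℝ≥0∞) * μ (M j) := by
      rw [hrw]
      calc μ (⋃ u ∈ Finset.range (L k j), (M k ∩ ((fun x => S^[u] (Sb^[c] x)) ⁻¹' (M j))))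
          ≤ ∑ u ∈ Finset.range (L k j), μ (M k ∩ ((fun x => S^[u] (Sb^[c] x)) ⁻¹' (M j))) :=
            measure_biUnion_finset_le _ _
      _ = ∑ u ∈ Finset.range (L k j), μ ((fun x => S^[c] (Sb^[u] x)) ⁻¹' (M k) ∩ M j) := by
            refine Finset.sum_congr rfl fun u _ => ?_
            refine meas_inter_swap ?_ ?_ ?_ (hMm k) (hMm j)
            · exact (hmpS.iterate u).comp (hmpSb.iterate c)
            · exact (hmS.iterate c).comp (hmSb.iterate u)
            · intro x
              rw [cancel_SbS hLinv u (Sb^[c] x), cancel_SSb hRinv c x]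
      _ ≤ (((L k j - 1) / g k + 1 : ℕ) : ℝ≥0∞) * μ (M j) :=
            count_bound hmS hmSb (hMm k) (hMm j) (gseq_pos k) (hMgap k) c (L k j) hRinv
    refine hmain.trans ?_
    rw [ENNReal.le_ofReal_iff_toReal_le (ENNReal.mul_ne_top (by simp) (measure_ne_top μ _))
      (add_nonneg (div_nonneg (by norm_num) (hgpos _).le)
        (div_nonneg (hnupos _).le (hgpos _).le))]
    rw [ENNReal.toReal_mul, ENNReal.toReal_natCast]
    have hKG : (K : ℝ) * (g k : ℝ) ≤ (l k : ℝ) + (l j : ℝ) + (g k : ℝ) := by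
      have h1 : (L k j - 1) / g k * g k ≤ L k j - 1 := Nat.div_mul_le_self _ _
      have h2 : L k j - 1 ≤ l k + l j := by
        have : L k j = l k + l j - 1 := rfl
        omega
      have h3 : K * g k ≤ l k + l j + g k := by
        rw [hK]
        calc ((L k j - 1) / g k + 1) * g k = (L k j - 1) / g k * g k + g k := by ring
        _ ≤ (L k j - 1) + g k := by omega
        _ ≤ l k + l j + g k := by omega
      exact_mod_cast h3
    have hmjGj : m j * (g j : ℝ) ≤ 1 := by
      have := hm_le j
      rw [le_div_iff₀ (hgpos j)] at this
      linarith
    have hljb : (l j : ℝ) ≤ nu j * (g j : ℝ) + 1 := hl_le j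
    have hlkb : (l k : ℝ) ≤ (g k : ℝ) := by exact_mod_cast hl_le_g k
    have hg2k : (2:ℝ) ≤ (g k : ℝ) := by exact_mod_cast hg2 k
    have hg2j : (2:ℝ) ≤ (g j : ℝ) := by exact_mod_cast hg2 j
    have hKnn : (0:ℝ) ≤ (K : ℝ) := Nat.cast_nonneg _
    have hprod : ((K : ℝ) * (g k : ℝ)) * (m j * (g j : ℝ)) ≤
        ((l k : ℝ) + (l j : ℝ) + (g k : ℝ)) * 1 := by
      apply mul_le_mul hKG hmjGj (mul_nonneg (hm_nonneg j) (hgpos j).le)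
      positivity
    rw [div_add_div _ _ (ne_of_gt (hgpos j)) (ne_of_gt (hgpos k)),
      le_div_iff₀ (mul_pos (hgpos j) (hgpos k))]
    have hnuj : 0 < nu j := hnupos j
    nlinarith [hm_nonneg j, hgpos j, hgpos k, mul_nonneg (hm_nonneg j) (hgpos j).le]
  -- ## summed loss bound
  have hCkbound : ∀ k, μ (M k ∩ ⋃ i : ℕ, Zw k (k + 1 + i)) ≤
      ENNReal.ofReal (6 / (g (k + 1) : ℝ) + nu k * (1 - a) / (g k : ℝ)) := by
    intro k
    have hgg : ∀ i : ℕ, (2:ℝ) ^ i * (g (k + 1) : ℝ) ≤ (g (k + 1 + i) : ℝ) := by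
      intro i
      exact_mod_cast gseq_growth k i
    have hf1le : ∀ i : ℕ, 3 / (g (k + 1 + i) : ℝ) ≤ 3 / (g (k + 1) : ℝ) * (1/2 : ℝ) ^ i := by
      intro i
      have h2 : (0:ℝ) < (2:ℝ) ^ i * (g (k + 1) : ℝ) := mul_pos (pow_pos two_pos i) (hgpos (k + 1))
      have h3 : 3 / (g (k + 1 + i) : ℝ) ≤ 3 / ((2:ℝ) ^ i * (g (k + 1) : ℝ)) := by
        apply div_le_div_of_nonneg_left (by norm_num) h2 (hgg i)
      refine h3.trans_eq ?_
      have hGne : (g (k + 1) : ℝ) ≠ 0 := ne_of_gt (hgpos (k + 1))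
      rw [div_pow, one_pow]
      field_simp
    have hnueq : ∀ i : ℕ, nu (k + 1 + i) = nu (k + 1) * lam ^ i := by
      intro i
      rw [hnu]
      unfold nuq
      rw [show k + 1 + i + 1 = (k + 1 + 1) + i by omega, pow_add]
      ring
    have hsum1 : Summable (fun i : ℕ => 3 / (g (k + 1 + i) : ℝ)) := by
      apply Summable.of_nonneg_of_le (fun i => by positivity) hf1le
      exact (summable_geometric_of_lt_one (by norm_num) (by norm_num)).mul_left _
    have hsum2 : Summable (fun i : ℕ => nu (k + 1 + i) / (g k : ℝ)) := by
      have : (fun i : ℕ => nu (k + 1 + i) / (g k : ℝ))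
          = fun i : ℕ => (nu (k + 1) / (g k : ℝ)) * lam ^ i := by
        funext i
        rw [hnueq i]
        ring
      rw [this]
      exact (summable_geometric_of_lt_one hlam0.le hlam1').mul_left _
    have htsum1 : ∑' i : ℕ, 3 / (g (k + 1 + i) : ℝ) ≤ 6 / (g (k + 1) : ℝ) := by
      calc ∑' i : ℕ, 3 / (g (k + 1 + i) : ℝ)
          ≤ ∑' i : ℕ, 3 / (g (k + 1) : ℝ) * (1/2 : ℝ) ^ i :=
            Summable.tsum_le_tsum hf1le hsum1 ((summable_geometric_of_lt_one (by norm_num)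
              (by norm_num)).mul_left _)
      _ = 3 / (g (k + 1) : ℝ) * ∑' i : ℕ, (1/2 : ℝ) ^ i := tsum_mul_left
      _ = 3 / (g (k + 1) : ℝ) * 2 := by
            rw [tsum_geometric_of_lt_one (by norm_num) (by norm_num)]
            norm_num
      _ = 6 / (g (k + 1) : ℝ) := by ring
    have htsum2 : ∑' i : ℕ, nu (k + 1 + i) / (g k : ℝ) = nu k * (1 - a) / (g k : ℝ) := by
      have h1 : (fun i : ℕ => nu (k + 1 + i) / (g k : ℝ))
          = fun i : ℕ => (nu (k + 1) / (g k : ℝ)) * lam ^ i := by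
        funext i
        rw [hnueq i]
        ring
      rw [h1, tsum_mul_left, tsum_geometric_of_lt_one hlam0.le hlam1']
      have h2 : nu (k + 1) = nu k * lam := by
        rw [hnu]; unfold nuq; ring
      rw [h2, h1a]
      field_simp
    have h0 : M k ∩ ⋃ i : ℕ, Zw k (k + 1 + i) = ⋃ i : ℕ, (M k ∩ Zw k (k + 1 + i)) :=
      inter_iUnion _ _
    rw [h0]
    calc μ (⋃ i : ℕ, (M k ∩ Zw k (k + 1 + i)))
        ≤ ∑' i : ℕ, μ (M k ∩ Zw k (k + 1 + i)) := measure_iUnion_le _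
    _ ≤ ∑' i : ℕ, ENNReal.ofReal (3 / (g (k + 1 + i) : ℝ) + nu (k + 1 + i) / (g k : ℝ)) :=
          ENNReal.tsum_le_tsum (fun i => hloss k i)
    _ = ENNReal.ofReal (∑' i : ℕ, (3 / (g (k + 1 + i) : ℝ) + nu (k + 1 + i) / (g k : ℝ))) :=
          (ENNReal.ofReal_tsum_of_nonneg (fun i => add_nonneg
            (div_nonneg (by norm_num) (hgpos _).le)
            (div_nonneg (hnupos _).le (hgpos _).le)) (hsum1.add hsum2)).symm
    _ ≤ ENNReal.ofReal (6 / (g (k + 1) : ℝ) + nu k * (1 - a) / (g k : ℝ)) := by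
          apply ENNReal.ofReal_le_ofReal
          rw [Summable.tsum_add hsum1 hsum2]
          have := htsum2
          linarith [htsum1]
  -- ## real bounds on measures of H and A
  have hh_le : ∀ k, (μ (H k)).toReal ≤ m k := fun k =>
    ENNReal.toReal_mono (measure_ne_top μ _) (measure_mono (hHsubM k))
  have hh_nn : ∀ k, 0 ≤ (μ (H k)).toReal := fun k => ENNReal.toReal_nonneg
  have hh_ge : ∀ k, m k - (6 / (g (k + 1) : ℝ) + nu k * (1 - a) / (g k : ℝ))
      ≤ (μ (H k)).toReal := by
    intro k
    have hsplit : M k ⊆ H k ∪ (M k ∩ ⋃ i : ℕ, Zw k (k + 1 + i)) := by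
      intro x hx
      by_cases hcase : x ∈ ⋃ i : ℕ, Zw k (k + 1 + i)
      · exact Or.inr ⟨hx, hcase⟩
      · exact Or.inl ⟨hx, hcase⟩
    have h2 : μ (M k) ≤ μ (H k) +
        ENNReal.ofReal (6 / (g (k + 1) : ℝ) + nu k * (1 - a) / (g k : ℝ)) := by
      calc μ (M k) ≤ μ (H k) + μ (M k ∩ ⋃ i : ℕ, Zw k (k + 1 + i)) :=
            (measure_mono hsplit).trans (measure_union_le _ _)
      _ ≤ _ := by gcongr; exact hCkbound k
    have h3 := ENNReal.toReal_mono
      (ENNReal.add_ne_top.2 ⟨measure_ne_top μ _, ENNReal.ofReal_ne_top⟩) h2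
    rw [ENNReal.toReal_add (measure_ne_top μ _) ENNReal.ofReal_ne_top,
      ENNReal.toReal_ofReal (add_nonneg (div_nonneg (by norm_num) (hgpos _).le)
        (div_nonneg (mul_nonneg (hnupos k).le (by linarith)) (hgpos k).le))] at h3
    rw [hmdef] at *
    linarith
  have hA_toReal : ∀ k, (μ (A k)).toReal = (l k : ℝ) * (μ (H k)).toReal := by
    intro k
    rw [hAval k, ENNReal.toReal_mul, ENNReal.toReal_natCast]
  have hmarmar : ∀ k, mar k / 32 ≤ mar k := fun k => by linarith [hmarpos k]
  have hAhigh : ∀ k, (μ (A k)).toReal ≤ lam ^ (k + 1) := by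
    intro k
    rw [hA_toReal k]
    have h1 : (l k : ℝ) * (μ (H k)).toReal ≤ (l k : ℝ) * m k :=
      mul_le_mul_of_nonneg_left (hh_le k) (Nat.cast_nonneg _)
    have h2 : (l k : ℝ) * m k ≤ (l k : ℝ) / (g k : ℝ) := by
      calc (l k : ℝ) * m k ≤ (l k : ℝ) * (1 / (g k : ℝ)) :=
            mul_le_mul_of_nonneg_left (hm_le k) (Nat.cast_nonneg _)
      _ = (l k : ℝ) / (g k : ℝ) := by ring
    have h3 : (l k : ℝ) / (g k : ℝ) ≤ nu k + 1 / (g k : ℝ) := by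
      rw [div_le_iff₀ (hgpos k)]
      have h4 : (nu k + 1 / (g k : ℝ)) * (g k : ℝ) = nu k * (g k : ℝ) + 1 := by
        have hne : (g k : ℝ) ≠ 0 := ne_of_gt (hgpos k)
        field_simp
      rw [h4]
      exact hl_le k
    have h5 : 1 / (g k : ℝ) ≤ mar k := le_trans (hinvg k) (hmarmar k)
    have h6 : nu k + mar k = lam ^ (k + 1) := by
      rw [hnu, hmar]; unfold nuq marq; ring
    linarith
  have hpowle : ∀ k, lam ^ (k + 1) ≤ lam := by
    intro k
    calc lam ^ (k + 1) = lam ^ k * lam := pow_succ lam k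
    _ ≤ 1 * lam := mul_le_mul_of_nonneg_right (pow_le_one₀ hlam0.le hlam1'.le) hlam0.le
    _ = lam := one_mul lam
  have key2 : ∀ k, nu k ^ 2 * (1 - a) ≤ mar k / 2 := by
    intro k
    have key2a : (1 + a) ^ 2 * lam ^ (k + 1) ≤ 1 :=
      le_trans (mul_le_mul_of_nonneg_left (hpowle k) (sq_nonneg _)) hcube
    have hmul := mul_le_mul_of_nonneg_right key2a
      (mul_nonneg (by linarith : (0:ℝ) ≤ 1 - a) (pow_pos hlam0 (k + 1)).le)
    rw [hnu, hmar]; unfold nuq marq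
    nlinarith [pow_pos hlam0 (k + 1), sq_nonneg (lam ^ (k + 1))]
  have hAlow : ∀ k, a * lam ^ (k + 1) ≤ (μ (A k)).toReal := by
    intro k
    rw [hA_toReal k]
    have hlknn : (0:ℝ) ≤ (l k : ℝ) := Nat.cast_nonneg _
    have e3 : (l k : ℝ) * m k - (l k : ℝ) * (6 / (g (k + 1) : ℝ) + nu k * (1 - a) / (g k : ℝ))
        ≤ (l k : ℝ) * (μ (H k)).toReal := by
      have e3' := mul_le_mul_of_nonneg_left (hh_ge k) hlknn
      rw [mul_sub] at e3'
      exact e3'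
    have e1 : nu k - nu k / (g k : ℝ) ≤ (l k : ℝ) * m k := by
      have hnn1 : (0:ℝ) ≤ 1 / (g k : ℝ) - 1 / (g k : ℝ) ^ 2 := by
        have h2g : (2:ℝ) ≤ (g k : ℝ) := by exact_mod_cast hg2 k
        rw [sub_nonneg, div_le_div_iff₀ (by positivity) (hgpos k)]
        nlinarith
      have e1' := mul_le_mul (hl_ge k) (hm_ge k) hnn1 hlknn
      have e1'' : nu k * (g k : ℝ) * (1 / (g k : ℝ) - 1 / (g k : ℝ) ^ 2)
          = nu k - nu k / (g k : ℝ) := by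
        have hne : (g k : ℝ) ≠ 0 := ne_of_gt (hgpos k)
        field_simp
      calc nu k - nu k / (g k : ℝ) = nu k * (g k : ℝ) * (1 / (g k : ℝ) - 1 / (g k : ℝ) ^ 2) :=
            e1''.symm
      _ ≤ (l k : ℝ) * m k := e1'
    have e2a : (l k : ℝ) * (6 / (g (k + 1) : ℝ)) ≤ mar k / 8 := by
      have h1 : 48 * (l k : ℝ) / mar k ≤ (g (k + 1) : ℝ) := gseq_geL k
      rw [div_le_iff₀ (hmarpos k)] at h1
      rw [show (l k : ℝ) * (6 / (g (k + 1) : ℝ)) = 6 * (l k : ℝ) / (g (k + 1) : ℝ) by ring,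
        div_le_div_iff₀ (hgpos (k + 1)) (by norm_num : (0:ℝ) < 8)]
      linarith
    have e2b : (l k : ℝ) * (nu k * (1 - a) / (g k : ℝ))
        ≤ nu k ^ 2 * (1 - a) + nu k * (1 - a) / (g k : ℝ) := by
      have hcnn : (0:ℝ) ≤ nu k * (1 - a) / (g k : ℝ) :=
        div_nonneg (mul_nonneg (hnupos k).le (by linarith)) (hgpos k).le
      have h1 := mul_le_mul_of_nonneg_right (hl_le k) hcnn
      refine h1.trans ?_
      have hne : (g k : ℝ) ≠ 0 := ne_of_gt (hgpos k)
      rw [add_mul, one_mul]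
      have h2 : nu k * (g k : ℝ) * (nu k * (1 - a) / (g k : ℝ)) = nu k ^ 2 * (1 - a) := by
        field_simp
      rw [h2]
    have b1 : nu k / (g k : ℝ) ≤ mar k / 32 := by
      refine le_trans ?_ (hinvg k)
      have := mul_le_mul_of_nonneg_right (hnule1 k) (inv_nonneg.2 (hgpos k).le)
      simpa [div_eq_mul_inv] using this
    have b2 : nu k * (1 - a) / (g k : ℝ) ≤ mar k / 32 := by
      refine le_trans ?_ (hinvg k)
      have hle1 : nu k * (1 - a) ≤ 1 := by
        have := hnule1 k
        have := (hnupos k).le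
        nlinarith
      have := mul_le_mul_of_nonneg_right hle1 (inv_nonneg.2 (hgpos k).le)
      simpa [div_eq_mul_inv] using this
    have hfin : nu k - mar k = a * lam ^ (k + 1) := by
      rw [hnu, hmar]; unfold nuq marq; ring
    have hk2 := key2 k
    have hmp := hmarpos k
    linarith
  -- ## defect bounds
  have hstep : ∀ k, μ (symmDiff (A k) (S ⁻¹' (A k))) ≤ 2 * μ (M k) := by
    intro k
    have hsub : symmDiff (A k) (S ⁻¹' (A k)) ⊆ H k ∪ S^[l k] ⁻¹' (H k) := by
      intro x hx
      rw [Set.mem_symmDiff] at hx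
      rcases hx with ⟨hxA, hxnA⟩ | ⟨hxA, hxnA⟩
      · left
        simp only [hAdef, mem_iUnion, Finset.mem_range, exists_prop, mem_preimage] at hxA hxnA
        obtain ⟨i, hi, hxi⟩ := hxA
        rcases Nat.eq_zero_or_pos i with h0 | hpos
        · rw [h0] at hxi
          simpa using hxi
        · exfalso
          apply hxnA
          refine ⟨i - 1, by omega, ?_⟩
          rw [show i = (i - 1) + 1 by omega] at hxi
          rw [Function.iterate_succ_apply] at hxi
          exact hxi
      · simp only [hAdef, mem_iUnion, Finset.mem_range, exists_prop, mem_preimage] at hxA hxnA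
        obtain ⟨i, hi, hxi⟩ := hxA
        rw [← Function.iterate_succ_apply] at hxi
        rcases Nat.lt_or_ge (i + 1) (l k) with hlt | hge
        · exact absurd ⟨i + 1, hlt, hxi⟩ hxnA
        · right
          have h5 : i.succ = l k := by omega
          rw [h5] at hxi
          exact hxi
    calc μ (symmDiff (A k) (S ⁻¹' (A k))) ≤ μ (H k ∪ S^[l k] ⁻¹' (H k)) := measure_mono hsub
    _ ≤ μ (H k) + μ (S^[l k] ⁻¹' (H k)) := measure_union_le _ _
    _ = μ (H k) + μ (H k) := by
        rw [(hmpS.iterate (l k)).measure_preimage (hHm k).nullMeasurableSet]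
    _ ≤ μ (M k) + μ (M k) := add_le_add (measure_mono (hHsubM k)) (measure_mono (hHsubM k))
    _ = 2 * μ (M k) := (two_mul _).symm
  have hd : ∀ k d, μ (symmDiff (A k) (S^[d] ⁻¹' (A k))) ≤ (d : ℝ≥0∞) * (2 * μ (M k)) := by
    intro k d
    induction d with
    | zero => simp
    | succ d ih =>
      have h2 : symmDiff (S^[d] ⁻¹' (A k)) (S^[d + 1] ⁻¹' (A k))
          = S^[d] ⁻¹' (symmDiff (A k) (S ⁻¹' (A k))) := by
        rw [Set.preimage_symmDiff]
        congr 1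
        ext x
        simp only [mem_preimage]
        rw [Function.iterate_succ_apply']
      have htri := symmDiff_triangle (A k) (S^[d] ⁻¹' (A k)) (S^[d + 1] ⁻¹' (A k))
      calc μ (symmDiff (A k) (S^[d + 1] ⁻¹' (A k)))
          ≤ μ (symmDiff (A k) (S^[d] ⁻¹' (A k)) ∪
              symmDiff (S^[d] ⁻¹' (A k)) (S^[d + 1] ⁻¹' (A k))) := measure_mono htri
      _ ≤ μ (symmDiff (A k) (S^[d] ⁻¹' (A k)))
          + μ (symmDiff (S^[d] ⁻¹' (A k)) (S^[d + 1] ⁻¹' (A k))) := measure_union_le _ _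
      _ ≤ (d : ℝ≥0∞) * (2 * μ (M k)) + 2 * μ (M k) := by
          refine add_le_add ih ?_
          rw [h2, (hmpS.iterate d).measure_preimage
            ((hAm k).symmDiff (hmS (hAm k))).nullMeasurableSet]
          exact hstep k
      _ = ((d + 1 : ℕ) : ℝ≥0∞) * (2 * μ (M k)) := by
          push_cast
          ring
  have hNbound : ∀ k, (N k : ℝ≥0∞) * (2 * μ (M k)) ≤ ENNReal.ofReal (ε k) := by
    intro k
    rw [ENNReal.le_ofReal_iff_toReal_le (ENNReal.mul_ne_top (by simp)
      (ENNReal.mul_ne_top (by simp) (measure_ne_top μ _))) (hεpos k).le]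
    rw [ENNReal.toReal_mul, ENNReal.toReal_mul, ENNReal.toReal_natCast, ENNReal.toReal_ofNat]
    have hNg : 4 * (N k : ℝ) / ε k ≤ (g k : ℝ) := gseq_geN k
    rw [div_le_iff₀ (hεpos k)] at hNg
    have hmk := hm_le k
    have hNnn : (0:ℝ) ≤ (N k : ℝ) := Nat.cast_nonneg _
    have h1 : (N k : ℝ) * (2 * m k) ≤ (N k : ℝ) * (2 * (1 / (g k : ℝ))) := by
      have := hm_le k
      nlinarith [hm_nonneg k]
    refine h1.trans ?_
    rw [show (N k : ℝ) * (2 * (1 / (g k : ℝ))) = 2 * (N k : ℝ) / (g k : ℝ) by ring]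
    rw [div_le_iff₀ (hgpos k)]
    nlinarith [hεpos k, hgpos k]
  have hdef : ∀ k i j, i ≤ N k → j ≤ N k → i ≤ j →
      μ (symmDiff (S^[i] ⁻¹' (A k)) (S^[j] ⁻¹' (A k))) ≤ ENNReal.ofReal (ε k) := by
    intro k i j hiN hjN hij
    have heq : symmDiff (S^[i] ⁻¹' (A k)) (S^[j] ⁻¹' (A k))
        = S^[i] ⁻¹' (symmDiff (A k) (S^[j - i] ⁻¹' (A k))) := by
      rw [Set.preimage_symmDiff]
      congr 1
      ext x
      simp only [mem_preimage]
      rw [← Function.iterate_add_apply, Nat.sub_add_cancel hij]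
    rw [heq, (hmpS.iterate i).measure_preimage
      ((hAm k).symmDiff ((hmS.iterate (j - i)) (hAm k))).nullMeasurableSet]
    calc μ (symmDiff (A k) (S^[j - i] ⁻¹' (A k))) ≤ ((j - i : ℕ) : ℝ≥0∞) * (2 * μ (M k)) :=
          hd k (j - i)
    _ ≤ (N k : ℝ≥0∞) * (2 * μ (M k)) := by
        gcongr
        exact_mod_cast (by omega : j - i ≤ N k)
    _ ≤ ENNReal.ofReal (ε k) := hNbound k
  -- ## conclusion
  refine ⟨A, fun k => hAC k, ?_, fun k => ⟨?_, ?_⟩, ?_⟩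
  · intro x y hxy
    rcases Nat.lt_or_ge x y with h | h
    · exact hdisj x y h
    · exact (hdisj y x (by omega)).symm
  · exact ENNReal.ofReal_le_of_le_toReal (hAlow k)
  · rw [ENNReal.le_ofReal_iff_toReal_le (measure_ne_top μ _) (pow_nonneg hlam0.le _)]
    exact hAhigh k
  · intro k i hi j hj
    have hTpow : ∀ n : ℕ, ⇑(T ^ n) = S^[n] := fun n => Equiv.Perm.coe_pow T n
    rw [hTpow i, hTpow j]
    rcases le_total i j with h | h
    · exact hdef k i j hi hj h
    · rw [symmDiff_comm]
      exact hdef k j i hj hi h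
end
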